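/- If G is a graph of order 14 with minimum degree at least 3 and maximum degree at least 4, then there exist four vertices whose closed neighborhood has at least 13 elements. -/

import Mathlib

variable {V : Type*} [Fintype V]

/-- Closed neighborhood of a set of vertices. -/
def closedN (G : SimpleGraph V) (S : Set V) : Set V := {v | v ∈ S ∨ ∃ u ∈ S, G.Adj u v}

namespace Supercubic

open Finset

variable {G : SimpleGraph V} [DecidableEq V] [DecidableRel G.Adj]

def Nc (G : SimpleGraph V) [DecidableRel G.Adj] (x : V) : Finset V :=
  insert x (G.neighborFinset x)

lemma mem_Nc {x y : V} : y ∈ Nc G x ↔ y = x ∨ G.Adj x y := by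
  simp [Nc, SimpleGraph.mem_neighborFinset]

lemma self_mem_Nc (x : V) : x ∈ Nc G x := by simp [mem_Nc]

lemma Nc_comm {x y : V} : y ∈ Nc G x ↔ x ∈ Nc G y := by
  simp only [mem_Nc]
  constructor
  · rintro (h | h)
    · exact Or.inl h.symm
    · exact Or.inr h.symm
  · rintro (h | h)
    · exact Or.inl h.symm
    · exact Or.inr h.symm

lemma card_Nc (x : V) : (Nc G x).card = G.degree x + 1 := by
  rw [Nc, Finset.card_insert_of_notMem (by simp), SimpleGraph.card_neighborFinset_eq_degree]

lemma double_count (s R : Finset V) :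
    ∑ x ∈ s, (R ∩ Nc G x).card = ∑ w ∈ R, (s ∩ Nc G w).card := by
  have h1 : ∀ (t : Finset V) (x : V), (t ∩ Nc G x).card = ∑ w ∈ t, if w ∈ Nc G x then 1 else 0 := by
    intro t x
    rw [← Finset.filter_mem_eq_inter, Finset.card_filter]
  simp only [h1]
  rw [Finset.sum_comm]
  apply Finset.sum_congr rfl
  intro w _
  apply Finset.sum_congr rfl
  intro x _
  simp only [Nc_comm (x := x) (y := w)]

/-! ### Context : `v` a vertex, `E = V \ {v}`, `W = V \ N[v]` -/

def Eb (v : V) : Finset V := Finset.univ.erase v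

variable (G) in
def Wb (v : V) [DecidableRel G.Adj] : Finset V := Finset.univ \ Nc G v

lemma card_Eb {v : V} (hcard : Fintype.card V = 14) : (Eb v).card = 13 := by
  rw [Eb, Finset.card_erase_of_mem (Finset.mem_univ v), Finset.card_univ, hcard]

lemma Nc_subset_Eb {v w : V} (hw : w ∈ Wb G v) : Nc G w ⊆ Eb v := by
  intro x hx
  rw [Eb, Finset.mem_erase]
  refine ⟨?_, Finset.mem_univ x⟩
  rintro rfl
  rw [Wb, Finset.mem_sdiff] at hw
  exact hw.2 (Nc_comm.mp hx)

lemma Eb_inter_Nc {v w : V} (hw : w ∈ Wb G v) : Eb v ∩ Nc G w = Nc G w :=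
  Finset.inter_eq_right.mpr (Nc_subset_Eb hw)

lemma card_Eb_inter_Nc {v w : V} (hw : w ∈ Wb G v) :
    (Eb v ∩ Nc G w).card = G.degree w + 1 := by
  rw [Eb_inter_Nc hw, card_Nc]

lemma sum_Eb (v : V) (R : Finset V) (hR : R ⊆ Wb G v) :
    ∑ x ∈ Eb v, (R ∩ Nc G x).card = ∑ w ∈ R, (G.degree w + 1) := by
  rw [double_count]
  exact Finset.sum_congr rfl fun w hw => card_Eb_inter_Nc (hR hw)

lemma sum_Eb_ge (hdeg : ∀ x, 3 ≤ G.degree x) (v : V) (R : Finset V) (hR : R ⊆ Wb G v) :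
    4 * R.card ≤ ∑ x ∈ Eb v, (R ∩ Nc G x).card := by
  rw [sum_Eb v R hR]
  calc 4 * R.card = ∑ _w ∈ R, 4 := by rw [Finset.sum_const, smul_eq_mul, mul_comm]
  _ ≤ ∑ w ∈ R, (G.degree w + 1) := Finset.sum_le_sum fun w _ => by
      have := hdeg w; omega

lemma pigeon (hcard : Fintype.card V = 14) (hdeg : ∀ x, 3 ≤ G.degree x) (v : V)
    (R : Finset V) (hR : R ⊆ Wb G v) (c : ℕ) (h : 13 * c < 4 * R.card) :
    ∃ x, c + 1 ≤ (R ∩ Nc G x).card := by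
  by_contra hc
  push_neg at hc
  have hbound : ∑ x ∈ Eb v, (R ∩ Nc G x).card ≤ 13 * c := by
    calc ∑ x ∈ Eb v, (R ∩ Nc G x).card ≤ ∑ _x ∈ Eb v, c :=
      Finset.sum_le_sum fun x _ => by have := hc x; omega
    _ = 13 * c := by rw [Finset.sum_const, smul_eq_mul, card_Eb hcard]
  have := sum_Eb_ge hdeg v R hR
  omega

/-- adding a new covered element -/
lemma cover_insert {v : V} {R : Finset V} {y z : V} (hz : z ∈ R) (hzy : z ∉ Nc G y) :
    (R ∩ Nc G y).card + 1 ≤ (R ∩ (Nc G y ∪ Nc G z)).card := by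
  have hsub : insert z (R ∩ Nc G y) ⊆ R ∩ (Nc G y ∪ Nc G z) := by
    intro u hu
    rw [Finset.mem_insert] at hu
    rcases hu with rfl | hu
    · exact Finset.mem_inter.mpr ⟨hz, Finset.mem_union_right _ (self_mem_Nc u)⟩
    · rw [Finset.mem_inter] at hu ⊢
      exact ⟨hu.1, Finset.mem_union_left _ hu.2⟩
  calc (R ∩ Nc G y).card + 1 = (insert z (R ∩ Nc G y)).card := by
        rw [Finset.card_insert_of_notMem (fun h => hzy (Finset.mem_inter.mp h).2)]
  _ ≤ _ := Finset.card_le_card hsub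

lemma cover2 (hcard : Fintype.card V = 14) (hdeg : ∀ x, 3 ≤ G.degree x)
    (v : V) (R : Finset V) (hR : R ⊆ Wb G v) (h4 : R.card ≤ 4) :
    ∃ y z : V, R.card - 1 ≤ (R ∩ (Nc G y ∪ Nc G z)).card := by
  rcases Nat.eq_zero_or_pos R.card with h0 | hpos
  · exact ⟨v, v, by omega⟩
  rcases Finset.card_pos.mp hpos with ⟨w, hw⟩
  by_cases h2 : R.card ≤ 2
  · refine ⟨w, w, ?_⟩
    have : w ∈ R ∩ (Nc G w ∪ Nc G w) :=
      Finset.mem_inter.mpr ⟨hw, Finset.mem_union_left _ (self_mem_Nc w)⟩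
    have := Finset.card_pos.mpr ⟨w, this⟩
    omega
  by_cases h3 : R.card = 3
  · obtain ⟨y, hy, z, hz, hyz⟩ := Finset.one_lt_card.mp (by omega : 1 < R.card)
    refine ⟨y, z, ?_⟩
    have hsub : ({y, z} : Finset V) ⊆ R ∩ (Nc G y ∪ Nc G z) := by
      intro u hu
      rcases Finset.mem_insert.mp hu with rfl | hu
      · exact Finset.mem_inter.mpr ⟨hy, Finset.mem_union_left _ (self_mem_Nc u)⟩
      · rw [Finset.mem_singleton] at hu; subst hu
        exact Finset.mem_inter.mpr ⟨hz, Finset.mem_union_right _ (self_mem_Nc u)⟩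
    have := Finset.card_le_card hsub
    rw [Finset.card_insert_of_notMem (by simp [hyz]), Finset.card_singleton] at this
    omega
  · -- R.card = 4
    have h4' : R.card = 4 := by omega
    obtain ⟨y, hy⟩ := pigeon hcard hdeg v R hR 1 (by omega)
    by_cases hsub : R ⊆ Nc G y
    · refine ⟨y, y, ?_⟩
      have : R ∩ (Nc G y ∪ Nc G y) = R := by
        rw [Finset.union_self, Finset.inter_eq_left]
        exact hsub
      rw [this]
      omega
    · obtain ⟨z, hzR, hzy⟩ := Finset.not_subset.mp hsub
      refine ⟨y, z, ?_⟩
      have := cover_insert (v := v) hzR hzy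
      omega


/-- in a two-element set, two elements different from `u` coincide -/
lemma two_elt_aux {P : Finset V} (hP : P.card = 2) {u w w' : V}
    (hu : u ∈ P) (hw : w ∈ P) (hw' : w' ∈ P) (h1 : w ≠ u) (h2 : w' ≠ u) : w = w' := by
  obtain ⟨c, d, hcd, rfl⟩ := Finset.card_eq_two.mp hP
  simp only [Finset.mem_insert, Finset.mem_singleton] at hu hw hw'
  rcases hu with rfl | rfl <;> rcases hw with rfl | rfl <;> rcases hw' with rfl | rfl <;>
    simp_all

lemma pair_other {P : Finset V} (hP : P.card = 2) {β : V} (hβ : β ∈ P) :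
    ∃ γ, γ ≠ β ∧ P = {β, γ} := by
  obtain ⟨c, d, hcd, rfl⟩ := Finset.card_eq_two.mp hP
  simp only [Finset.mem_insert, Finset.mem_singleton] at hβ
  rcases hβ with rfl | rfl
  · exact ⟨d, fun h => hcd h.symm, rfl⟩
  · exact ⟨c, fun h => hcd h, by rw [Finset.pair_comm]⟩

lemma coverM (hcard : Fintype.card V = 14) (hdeg : ∀ x, 3 ≤ G.degree x)
    (hΔ : ∀ x, G.degree x ≤ 5) (v : V) (R : Finset V) (hR : R ⊆ Wb G v)
    (h5 : R.card = 5) :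
    ∃ y z : V, 4 ≤ (R ∩ (Nc G y ∪ Nc G z)).card := by
  by_contra hcon
  push_neg at hcon
  -- step 0 : all covers ≤ 2
  have step0 : ∀ y : V, (R ∩ Nc G y).card ≤ 2 := by
    intro y
    by_contra h3
    push_neg at h3
    have hns : ¬ R ⊆ Nc G y := by
      intro hsub
      have heq : R ∩ Nc G y = R := Finset.inter_eq_left.mpr hsub
      have h5' : (R ∩ Nc G y).card = 5 := by rw [heq, h5]
      have h1 := hcon y y
      have h2 : (R ∩ Nc G y).card ≤ (R ∩ (Nc G y ∪ Nc G y)).card :=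
        Finset.card_le_card (by rw [Finset.union_self])
      omega
    obtain ⟨w, hwR, hwy⟩ := Finset.not_subset.mp hns
    have := cover_insert (v := v) hwR hwy
    have := hcon y w
    omega
  -- the set of vertices covering ≥ 2
  set F2 : Finset V := (Eb v).filter (fun x => 2 ≤ (R ∩ Nc G x).card) with hF2def
  have hmemF2 : ∀ x ∈ F2, 2 ≤ (R ∩ Nc G x).card := fun x hx => (Finset.mem_filter.mp hx).2
  have h7 : 7 ≤ F2.card := by
    have hsum := sum_Eb_ge hdeg v R hR
    rw [h5] at hsum
    have hsplit := Finset.sum_filter_add_sum_filter_not (Eb v)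
      (fun x => 2 ≤ (R ∩ Nc G x).card) (fun x => (R ∩ Nc G x).card)
    have hb1 : ∑ x ∈ F2, (R ∩ Nc G x).card ≤ F2.card * 2 := by
      have := Finset.sum_le_card_nsmul F2 (fun x => (R ∩ Nc G x).card) 2
        (fun x _ => step0 x)
      simpa using this
    have hb2 : ∑ x ∈ (Eb v).filter (fun x => ¬ 2 ≤ (R ∩ Nc G x).card), (R ∩ Nc G x).card
        ≤ ((Eb v).filter (fun x => ¬ 2 ≤ (R ∩ Nc G x).card)).card * 1 := by
      have := Finset.sum_le_card_nsmul ((Eb v).filter (fun x => ¬ 2 ≤ (R ∩ Nc G x).card))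
        (fun x => (R ∩ Nc G x).card) 1
        (fun x hx => by
          have h := (Finset.mem_filter.mp hx).2
          show (R ∩ Nc G x).card ≤ 1
          omega)
      simpa using this
    have hcards : ((Eb v).filter (fun x => 2 ≤ (R ∩ Nc G x).card)).card
        + ((Eb v).filter (fun x => ¬ 2 ≤ (R ∩ Nc G x).card)).card
        = (Eb v).card :=
      Finset.card_filter_add_card_filter_not (p := fun x => 2 ≤ (R ∩ Nc G x).card)
    rw [card_Eb hcard] at hcards
    rw [← hF2def] at hsplit hcards
    omega
  -- pairwise intersecting
  have hpair : ∀ x ∈ F2, ∀ x' ∈ F2, ((R ∩ Nc G x) ∩ (R ∩ Nc G x')).Nonempty := by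
    intro x hx x' hx'
    rw [Finset.nonempty_iff_ne_empty]
    intro hdisj
    have hd : Disjoint (R ∩ Nc G x) (R ∩ Nc G x') := Finset.disjoint_iff_inter_eq_empty.mpr hdisj
    have hu : (R ∩ Nc G x) ∪ (R ∩ Nc G x') = R ∩ (Nc G x ∪ Nc G x') :=
      (Finset.inter_union_distrib_left R _ _).symm
    have h4 := hcon x x'
    have hcu := Finset.card_union_of_disjoint hd
    rw [hu] at hcu
    have := hmemF2 x hx
    have := hmemF2 x' hx'
    omega
  -- extract x0 and the pair {α, β}
  obtain ⟨x0, hx0⟩ := Finset.card_pos.mp (by omega : 0 < F2.card)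
  have hP0card : (R ∩ Nc G x0).card = 2 := le_antisymm (step0 x0) (hmemF2 x0 hx0)
  obtain ⟨α, β, hab, hP0⟩ := Finset.card_eq_two.mp hP0card
  have hαP0 : α ∈ R ∩ Nc G x0 := by rw [hP0]; exact Finset.mem_insert_self _ _
  have hβP0 : β ∈ R ∩ Nc G x0 := by rw [hP0]; simp
  have hαW : α ∈ Wb G v := hR (Finset.mem_inter.mp hαP0).1
  have hβW : β ∈ Wb G v := hR (Finset.mem_inter.mp hβP0).1
  -- no common element in all pairs
  have hstar : ∀ u : V, u ∈ Wb G v → ¬ (∀ x ∈ F2, u ∈ R ∩ Nc G x) := by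
    intro u hu hall
    have hsub : F2 ⊆ Eb v ∩ Nc G u := by
      intro x hx
      have hxE : x ∈ Eb v := Finset.mem_of_mem_filter x hx
      have := (Finset.mem_inter.mp (hall x hx)).2
      exact Finset.mem_inter.mpr ⟨hxE, Nc_comm.mp this⟩
    have hle := Finset.card_le_card hsub
    rw [card_Eb_inter_Nc hu] at hle
    have := hΔ u
    omega
  obtain ⟨x1, hx1F, hx1α⟩ : ∃ x ∈ F2, α ∉ R ∩ Nc G x := by
    by_contra hall
    push_neg at hall
    exact hstar α hαW hall
  obtain ⟨x2, hx2F, hx2β⟩ : ∃ x ∈ F2, β ∉ R ∩ Nc G x := by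
    by_contra hall
    push_neg at hall
    exact hstar β hβW hall
  have hP1card : (R ∩ Nc G x1).card = 2 := le_antisymm (step0 x1) (hmemF2 x1 hx1F)
  have hP2card : (R ∩ Nc G x2).card = 2 := le_antisymm (step0 x2) (hmemF2 x2 hx2F)
  -- β ∈ P1
  obtain ⟨w0, hw0⟩ := hpair x1 hx1F x0 hx0
  have hw0P1 : w0 ∈ R ∩ Nc G x1 := (Finset.mem_inter.mp hw0).1
  have hw0P0 : w0 ∈ R ∩ Nc G x0 := (Finset.mem_inter.mp hw0).2
  have hβP1 : β ∈ R ∩ Nc G x1 := by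
    rw [hP0] at hw0P0
    rcases Finset.mem_insert.mp hw0P0 with rfl | h
    · exact absurd hw0P1 hx1α
    · rw [Finset.mem_singleton] at h; subst h; exact hw0P1
  obtain ⟨γ, hγβ, hP1⟩ := pair_other hP1card hβP1
  have hγP1 : γ ∈ R ∩ Nc G x1 := by rw [hP1]; simp
  have hγα : γ ≠ α := by rintro rfl; exact hx1α hγP1
  -- α ∈ P2
  obtain ⟨w1, hw1⟩ := hpair x2 hx2F x0 hx0
  have hw1P2 : w1 ∈ R ∩ Nc G x2 := (Finset.mem_inter.mp hw1).1
  have hw1P0 : w1 ∈ R ∩ Nc G x0 := (Finset.mem_inter.mp hw1).2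
  have hαP2 : α ∈ R ∩ Nc G x2 := by
    rw [hP0] at hw1P0
    rcases Finset.mem_insert.mp hw1P0 with rfl | h
    · exact hw1P2
    · rw [Finset.mem_singleton] at h; subst h; exact absurd hw1P2 hx2β
  obtain ⟨δ, hδα, hP2⟩ := pair_other hP2card hαP2
  have hδP2 : δ ∈ R ∩ Nc G x2 := by rw [hP2]; simp
  -- δ = γ
  obtain ⟨w2, hw2⟩ := hpair x2 hx2F x1 hx1F
  have hw2P2 : w2 ∈ R ∩ Nc G x2 := (Finset.mem_inter.mp hw2).1
  have hw2P1 : w2 ∈ R ∩ Nc G x1 := (Finset.mem_inter.mp hw2).2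
  have hδγ : δ = γ := by
    rw [hP2] at hw2P2
    rcases Finset.mem_insert.mp hw2P2 with rfl | h
    · exact absurd hw2P1 hx1α
    · rw [Finset.mem_singleton] at h
      subst h
      rw [hP1] at hw2P1
      rcases Finset.mem_insert.mp hw2P1 with h2 | h2
      · rw [h2] at hδP2
        exact absurd hδP2 hx2β
      · rw [Finset.mem_singleton] at h2
        exact h2
  have hP2γ : R ∩ Nc G x2 = {α, γ} := by rw [hP2, hδγ]
  -- triangle property
  have htri : ∀ x ∈ F2, R ∩ Nc G x ⊆ ({α, β, γ} : Finset V) := by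
    intro x hxF u hu
    by_contra huout
    simp only [Finset.mem_insert, Finset.mem_singleton, not_or] at huout
    obtain ⟨huα, huβ, huγ⟩ := huout
    have hPxcard : (R ∩ Nc G x).card = 2 := le_antisymm (step0 x) (hmemF2 x hxF)
    obtain ⟨a0, ha0⟩ := hpair x hxF x0 hx0
    obtain ⟨a1, ha1⟩ := hpair x hxF x1 hx1F
    obtain ⟨a2, ha2⟩ := hpair x hxF x2 hx2F
    have ha0x : a0 ∈ R ∩ Nc G x := (Finset.mem_inter.mp ha0).1
    have ha1x : a1 ∈ R ∩ Nc G x := (Finset.mem_inter.mp ha1).1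
    have ha2x : a2 ∈ R ∩ Nc G x := (Finset.mem_inter.mp ha2).1
    have ha0P0 : a0 ∈ R ∩ Nc G x0 := (Finset.mem_inter.mp ha0).2
    have ha1P1 : a1 ∈ R ∩ Nc G x1 := (Finset.mem_inter.mp ha1).2
    have ha2P2 : a2 ∈ R ∩ Nc G x2 := (Finset.mem_inter.mp ha2).2
    rw [hP0] at ha0P0
    rw [hP1] at ha1P1
    rw [hP2γ] at ha2P2
    simp only [Finset.mem_insert, Finset.mem_singleton] at ha0P0 ha1P1 ha2P2
    have ha0u : a0 ≠ u := by
      rcases ha0P0 with h | h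
      · rw [h]; exact fun hh => huα hh.symm
      · rw [h]; exact fun hh => huβ hh.symm
    have ha1u : a1 ≠ u := by
      rcases ha1P1 with h | h
      · rw [h]; exact fun hh => huβ hh.symm
      · rw [h]; exact fun hh => huγ hh.symm
    have ha2u : a2 ≠ u := by
      rcases ha2P2 with h | h
      · rw [h]; exact fun hh => huα hh.symm
      · rw [h]; exact fun hh => huγ hh.symm
    have h01 : a0 = a1 := two_elt_aux hPxcard hu ha0x ha1x ha0u ha1u
    have h02 : a0 = a2 := two_elt_aux hPxcard hu ha0x ha2x ha0u ha2u
    subst h01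
    subst h02
    rcases ha0P0 with rfl | rfl
    · rcases ha1P1 with h | h
      · exact hab h
      · exact hγα h.symm
    · rcases ha2P2 with h | h
      · exact hab h.symm
      · exact hγβ h.symm
  -- two outside elements s, t
  have hγR : γ ∈ R := (Finset.mem_inter.mp hγP1).1
  have hαR : α ∈ R := (Finset.mem_inter.mp hαP0).1
  have hβR : β ∈ R := (Finset.mem_inter.mp hβP0).1
  have htricard : ({α, β, γ} : Finset V).card ≤ 3 := by
    refine le_trans (Finset.card_insert_le _ _) ?_
    refine Nat.succ_le_succ ?_
    refine le_trans (Finset.card_insert_le _ _) ?_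
    simp
  have hRst : 2 ≤ (R \ ({α, β, γ} : Finset V)).card := by
    have hsub : ({α, β, γ} : Finset V) ⊆ R := by
      intro u hu
      simp only [Finset.mem_insert, Finset.mem_singleton] at hu
      rcases hu with rfl | rfl | rfl <;> assumption
    have h1 : (R \ ({α, β, γ} : Finset V)).card = R.card - ({α, β, γ} : Finset V).card :=
      Finset.card_sdiff_of_subset hsub
    omega
  obtain ⟨s, hs, t, ht, hst⟩ := Finset.one_lt_card.mp (by omega : 1 < (R \ ({α, β, γ} : Finset V)).card)
  have hsR : s ∈ R := (Finset.mem_sdiff.mp hs).1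
  have htR : t ∈ R := (Finset.mem_sdiff.mp ht).1
  have hsout : s ∉ ({α, β, γ} : Finset V) := (Finset.mem_sdiff.mp hs).2
  have htout : t ∉ ({α, β, γ} : Finset V) := (Finset.mem_sdiff.mp ht).2
  -- the three disjoint families
  have hnotF2 : ∀ u, u ∈ R → u ∉ ({α, β, γ} : Finset V) → ∀ x ∈ F2, u ∉ Nc G x := by
    intro u huR huout x hxF hmem
    have : u ∈ R ∩ Nc G x := Finset.mem_inter.mpr ⟨huR, hmem⟩
    exact huout (htri x hxF this)
  have hdisjF2s : Disjoint F2 (Eb v ∩ Nc G s) := by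
    rw [Finset.disjoint_left]
    intro x hxF hxs
    exact hnotF2 s hsR hsout x hxF (Nc_comm.mp (Finset.mem_inter.mp hxs).2)
  have hdisjF2t : Disjoint F2 (Eb v ∩ Nc G t) := by
    rw [Finset.disjoint_left]
    intro x hxF hxt
    exact hnotF2 t htR htout x hxF (Nc_comm.mp (Finset.mem_inter.mp hxt).2)
  have hdisjst : Disjoint (Eb v ∩ Nc G s) (Eb v ∩ Nc G t) := by
    rw [Finset.disjoint_left]
    intro x hxs hxt
    have hsN : s ∈ R ∩ Nc G x :=
      Finset.mem_inter.mpr ⟨hsR, Nc_comm.mp (Finset.mem_inter.mp hxs).2⟩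
    have htN : t ∈ R ∩ Nc G x :=
      Finset.mem_inter.mpr ⟨htR, Nc_comm.mp (Finset.mem_inter.mp hxt).2⟩
    have hcard2 : 2 ≤ (R ∩ Nc G x).card := by
      have : ({s, t} : Finset V) ⊆ R ∩ Nc G x := by
        intro u hu
        rcases Finset.mem_insert.mp hu with rfl | hu
        · exact hsN
        · rw [Finset.mem_singleton] at hu; subst hu; exact htN
      have hc := Finset.card_le_card this
      rw [Finset.card_insert_of_notMem (by simp [hst]), Finset.card_singleton] at hc
      omega
    have hxF2 : x ∈ F2 := Finset.mem_filter.mpr ⟨(Finset.mem_inter.mp hxs).1, hcard2⟩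
    exact hnotF2 s hsR hsout x hxF2 (Nc_comm.mp (Finset.mem_inter.mp hxs).2)
  -- counting
  have hsW : s ∈ Wb G v := hR hsR
  have htW : t ∈ Wb G v := hR htR
  have hcs : (Eb v ∩ Nc G s).card = G.degree s + 1 := card_Eb_inter_Nc hsW
  have hct : (Eb v ∩ Nc G t).card = G.degree t + 1 := card_Eb_inter_Nc htW
  have hds := hdeg s
  have hdt := hdeg t
  have hsubE : F2 ∪ (Eb v ∩ Nc G s) ∪ (Eb v ∩ Nc G t) ⊆ Eb v := by
    intro x hx
    rcases Finset.mem_union.mp hx with hx | hx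
    · rcases Finset.mem_union.mp hx with hx | hx
      · exact Finset.mem_of_mem_filter x hx
      · exact (Finset.mem_inter.mp hx).1
    · exact (Finset.mem_inter.mp hx).1
  have hcardle := Finset.card_le_card hsubE
  rw [card_Eb hcard] at hcardle
  have hc1 : (F2 ∪ (Eb v ∩ Nc G s)).card = F2.card + (Eb v ∩ Nc G s).card :=
    Finset.card_union_of_disjoint hdisjF2s
  have hdisj2 : Disjoint (F2 ∪ (Eb v ∩ Nc G s)) (Eb v ∩ Nc G t) :=
    Finset.disjoint_union_left.mpr ⟨hdisjF2t, hdisjst⟩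
  have hc2 : (F2 ∪ (Eb v ∩ Nc G s) ∪ (Eb v ∩ Nc G t)).card
      = (F2 ∪ (Eb v ∩ Nc G s)).card + (Eb v ∩ Nc G t).card :=
    Finset.card_union_of_disjoint hdisj2
  omega


omit [Fintype V] [DecidableEq V] in
lemma sum_tight_le {s : Finset V} {f : V → ℕ} {c : ℕ}
    (hle : ∀ x ∈ s, f x ≤ c) (hsum : c * s.card ≤ ∑ x ∈ s, f x) : ∀ x ∈ s, f x = c := by
  intro x hx
  by_contra hne
  have hlt : f x < c := lt_of_le_of_ne (hle x hx) hne
  have : ∑ y ∈ s, f y < ∑ _y ∈ s, c :=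
    Finset.sum_lt_sum (fun y hy => hle y hy) ⟨x, hx, hlt⟩
  rw [Finset.sum_const, smul_eq_mul, mul_comm] at this
  omega

omit [Fintype V] [DecidableEq V] in
lemma sum_tight_ge {s : Finset V} {f : V → ℕ} {c : ℕ}
    (hge : ∀ x ∈ s, c ≤ f x) (hsum : ∑ x ∈ s, f x ≤ c * s.card) : ∀ x ∈ s, f x = c := by
  intro x hx
  by_contra hne
  have hlt : c < f x := lt_of_le_of_ne (hge x hx) (Ne.symm hne)
  have : ∑ _y ∈ s, c < ∑ y ∈ s, f y :=
    Finset.sum_lt_sum (fun y hy => hge y hy) ⟨x, hx, hlt⟩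
  rw [Finset.sum_const, smul_eq_mul, mul_comm] at this
  omega

lemma coverK (hcard : Fintype.card V = 14) (hdeg : ∀ x, 3 ≤ G.degree x)
    (hΔ : ∀ x : V, G.degree x ≤ 4) (v : V) (h9 : (Wb G v).card = 9)
    (hc3 : ∀ x : V, ((Wb G v) ∩ Nc G x).card ≤ 3) :
    ∃ x y z : V, 8 ≤ ((Wb G v) ∩ (Nc G x ∪ Nc G y ∪ Nc G z)).card := by
  by_contra hcon
  push_neg at hcon
  set W := Wb G v with hWdef
  -- union bound in distributive form
  have hun3 : ∀ x y z : V, ((W ∩ Nc G x) ∪ (W ∩ Nc G y) ∪ (W ∩ Nc G z)).card ≤ 7 := by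
    intro x y z
    have h := hcon x y z
    have heq : W ∩ (Nc G x ∪ Nc G y ∪ Nc G z)
        = (W ∩ Nc G x) ∪ (W ∩ Nc G y) ∪ (W ∩ Nc G z) := by
      rw [Finset.inter_union_distrib_left, Finset.inter_union_distrib_left]
    rw [heq] at h
    omega
  have hWsub : W ⊆ Wb G v := le_refl _
  -- membership counts
  have hmw : ∀ w ∈ W, (Eb v ∩ Nc G w).card = G.degree w + 1 := fun w hw =>
    card_Eb_inter_Nc (hWsub hw)
  have hmw4 : ∀ w ∈ W, 4 ≤ (Eb v ∩ Nc G w).card := by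
    intro w hw; rw [hmw w hw]; have := hdeg w; omega
  have hmw5 : ∀ w ∈ W, (Eb v ∩ Nc G w).card ≤ 5 := by
    intro w hw; rw [hmw w hw]; have := hΔ w; omega
  -- total sum
  have hsumW : 36 ≤ ∑ x ∈ Eb v, (W ∩ Nc G x).card := by
    rw [sum_Eb v W hWsub]
    calc (36 : ℕ) = ∑ _w ∈ W, 4 := by rw [Finset.sum_const, smul_eq_mul, h9]
    _ ≤ _ := Finset.sum_le_sum fun w _ => by have := hdeg w; omega
  -- triples
  set T : Finset V := (Eb v).filter (fun x => 3 ≤ (W ∩ Nc G x).card) with hTdef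
  have hTsub : T ⊆ Eb v := Finset.filter_subset _ _
  have hT3 : ∀ x ∈ T, (W ∩ Nc G x).card = 3 := fun x hx =>
    le_antisymm (hc3 x) (Finset.mem_filter.mp hx).2
  have hnotT : ∀ x ∈ Eb v, x ∉ T → (W ∩ Nc G x).card ≤ 2 := by
    intro x hxE hxT
    by_contra h
    exact hxT (Finset.mem_filter.mpr ⟨hxE, by omega⟩)
  have hT10 : 10 ≤ T.card := by
    have hsplit := Finset.sum_filter_add_sum_filter_not (Eb v)
      (fun x => 3 ≤ (W ∩ Nc G x).card) (fun x => (W ∩ Nc G x).card)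
    have hb1 : ∑ x ∈ T, (W ∩ Nc G x).card ≤ T.card * 3 := by
      have := Finset.sum_le_card_nsmul T (fun x => (W ∩ Nc G x).card) 3
        (fun x hx => by show (W ∩ Nc G x).card ≤ 3; exact hc3 x)
      simpa using this
    have hb2 : ∑ x ∈ (Eb v).filter (fun x => ¬ 3 ≤ (W ∩ Nc G x).card), (W ∩ Nc G x).card
        ≤ ((Eb v).filter (fun x => ¬ 3 ≤ (W ∩ Nc G x).card)).card * 2 := by
      have := Finset.sum_le_card_nsmul ((Eb v).filter (fun x => ¬ 3 ≤ (W ∩ Nc G x).card))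
        (fun x => (W ∩ Nc G x).card) 2
        (fun x hx => by
          have h := (Finset.mem_filter.mp hx).2
          show (W ∩ Nc G x).card ≤ 2
          omega)
      simpa using this
    have hcards : ((Eb v).filter (fun x => 3 ≤ (W ∩ Nc G x).card)).card
        + ((Eb v).filter (fun x => ¬ 3 ≤ (W ∩ Nc G x).card)).card = (Eb v).card :=
      Finset.card_filter_add_card_filter_not (p := fun x => 3 ≤ (W ∩ Nc G x).card)
    rw [card_Eb hcard] at hcards
    rw [← hTdef] at hsplit hcards
    omega
  have hT13 : T.card ≤ 13 := by
    have := Finset.card_le_card hTsub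
    rw [card_Eb hcard] at this
    exact this
  -- no two disjoint triples
  have hint : ∀ a ∈ T, ∀ b ∈ T, ((W ∩ Nc G a) ∩ (W ∩ Nc G b)).Nonempty := by
    intro a ha b hb
    rw [Finset.nonempty_iff_ne_empty]
    intro hdisj
    have hd : Disjoint (W ∩ Nc G a) (W ∩ Nc G b) := Finset.disjoint_iff_inter_eq_empty.mpr hdisj
    have hab : a ≠ b := by
      rintro rfl
      rw [Finset.inter_self] at hdisj
      have := hT3 a ha
      rw [hdisj] at this
      simp at this
    have hUcard : ((W ∩ Nc G a) ∪ (W ∩ Nc G b)).card = 6 := by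
      rw [Finset.card_union_of_disjoint hd, hT3 a ha, hT3 b hb]
    set O : Finset V := W \ ((W ∩ Nc G a) ∪ (W ∩ Nc G b)) with hOdef
    have hOsub : O ⊆ W := Finset.sdiff_subset
    have hOcard : O.card = 3 := by
      have hsub : (W ∩ Nc G a) ∪ (W ∩ Nc G b) ⊆ W := by
        intro u hu
        rcases Finset.mem_union.mp hu with hu | hu
        · exact (Finset.mem_inter.mp hu).1
        · exact (Finset.mem_inter.mp hu).1
      rw [hOdef, Finset.card_sdiff_of_subset hsub, hUcard, h9]
    have hsumO : 12 ≤ ∑ x ∈ Eb v, (O ∩ Nc G x).card := by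
      rw [sum_Eb v O (hOsub.trans hWsub)]
      calc (12 : ℕ) = ∑ _w ∈ O, 4 := by rw [Finset.sum_const, smul_eq_mul, hOcard]
      _ ≤ _ := Finset.sum_le_sum fun w _ => by have := hdeg w; omega
    -- upper bound
    have habE : ({a, b} : Finset V) ⊆ Eb v := by
      intro u hu
      rcases Finset.mem_insert.mp hu with rfl | hu
      · exact hTsub ha
      · rw [Finset.mem_singleton] at hu; subst hu; exact hTsub hb
    have hOa : O ∩ Nc G a = ∅ := by
      rw [Finset.eq_empty_iff_forall_notMem]
      intro u hu
      have h1 := Finset.mem_inter.mp hu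
      have huO : u ∈ O := h1.1
      have huW : u ∈ W := hOsub huO
      have : u ∈ (W ∩ Nc G a) ∪ (W ∩ Nc G b) :=
        Finset.mem_union_left _ (Finset.mem_inter.mpr ⟨huW, h1.2⟩)
      exact (Finset.mem_sdiff.mp huO).2 this
    have hOb : O ∩ Nc G b = ∅ := by
      rw [Finset.eq_empty_iff_forall_notMem]
      intro u hu
      have h1 := Finset.mem_inter.mp hu
      have huO : u ∈ O := h1.1
      have huW : u ∈ W := hOsub huO
      have : u ∈ (W ∩ Nc G a) ∪ (W ∩ Nc G b) :=
        Finset.mem_union_right _ (Finset.mem_inter.mpr ⟨huW, h1.2⟩)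
      exact (Finset.mem_sdiff.mp huO).2 this
    have hrest : ∀ x ∈ Eb v \ {a, b}, (O ∩ Nc G x).card ≤ 1 := by
      intro x hx
      have hu3 := hun3 a b x
      have hUsub : (W ∩ Nc G a) ∪ (W ∩ Nc G b)
          ⊆ (W ∩ Nc G a) ∪ (W ∩ Nc G b) ∪ (W ∩ Nc G x) := Finset.subset_union_left
      have hsd : (O ∩ Nc G x) ⊆ ((W ∩ Nc G a) ∪ (W ∩ Nc G b) ∪ (W ∩ Nc G x))
          \ ((W ∩ Nc G a) ∪ (W ∩ Nc G b)) := by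
        intro u hu
        have h1 := Finset.mem_inter.mp hu
        have huW : u ∈ W := hOsub h1.1
        rw [Finset.mem_sdiff]
        exact ⟨Finset.mem_union_right _ (Finset.mem_inter.mpr ⟨huW, h1.2⟩),
          (Finset.mem_sdiff.mp h1.1).2⟩
      have := Finset.card_le_card hsd
      rw [Finset.card_sdiff_of_subset hUsub, hUcard] at this
      omega
    have hsplit : ∑ x ∈ Eb v \ ({a, b} : Finset V), (O ∩ Nc G x).card
        + ∑ x ∈ ({a, b} : Finset V), (O ∩ Nc G x).card
        = ∑ x ∈ Eb v, (O ∩ Nc G x).card := Finset.sum_sdiff habE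
    have hpairsum : ∑ x ∈ ({a, b} : Finset V), (O ∩ Nc G x).card = 0 := by
      rw [Finset.sum_pair hab, hOa, hOb]
      simp
    have hrestsum : ∑ x ∈ Eb v \ ({a, b} : Finset V), (O ∩ Nc G x).card
        ≤ (Eb v \ ({a, b} : Finset V)).card * 1 := by
      have := Finset.sum_le_card_nsmul (Eb v \ ({a, b} : Finset V))
        (fun x => (O ∩ Nc G x).card) 1 (fun x hx => by
          show (O ∩ Nc G x).card ≤ 1
          exact hrest x hx)
      simpa using this
    have hcard2 : ({a, b} : Finset V).card = 2 := by
      rw [Finset.card_insert_of_notMem (by simp [hab]), Finset.card_singleton]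
    have hcsd : (Eb v \ ({a, b} : Finset V)).card = 11 := by
      rw [Finset.card_sdiff_of_subset habE, hcard2, card_Eb hcard]
    rw [hcsd] at hrestsum
    omega
  -- two triples meeting in exactly one point
  have hstep3 : ∃ a ∈ T, ∃ b ∈ T, ((W ∩ Nc G a) ∩ (W ∩ Nc G b)).card = 1 := by
    by_contra hno
    push_neg at hno
    have hall2 : ∀ a ∈ T, ∀ b ∈ T, 2 ≤ ((W ∩ Nc G a) ∩ (W ∩ Nc G b)).card := by
      intro a ha b hb
      have hne := hint a ha b hb
      have h1 := hno a ha b hb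
      have := Finset.card_pos.mpr hne
      omega
    have hbig : ∀ w ∈ W, ¬ (T ⊆ Eb v ∩ Nc G w) := by
      intro w hw hsub
      have h1 := Finset.card_le_card hsub
      have h2 := hmw5 w hw
      omega
    by_cases halleq : ∀ a ∈ T, ∀ b ∈ T, W ∩ Nc G a = W ∩ Nc G b
    · obtain ⟨a0, ha0⟩ := Finset.card_pos.mp (by omega : 0 < T.card)
      obtain ⟨w, hw⟩ := Finset.card_pos.mp
        (by rw [hT3 a0 ha0]; omega : 0 < (W ∩ Nc G a0).card)
      refine hbig w (Finset.mem_inter.mp hw).1 ?_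
      intro x hx
      refine Finset.mem_inter.mpr ⟨hTsub hx, ?_⟩
      have : w ∈ W ∩ Nc G x := by rw [halleq x hx a0 ha0]; exact hw
      exact Nc_comm.mp (Finset.mem_inter.mp this).2
    · push_neg at halleq
      obtain ⟨a, ha, b, hb, hne⟩ := halleq
      have hPcard : ((W ∩ Nc G a) ∩ (W ∩ Nc G b)).card = 2 := by
        have hle : ((W ∩ Nc G a) ∩ (W ∩ Nc G b)).card ≤ 3 := by
          have hsb : ((W ∩ Nc G a) ∩ (W ∩ Nc G b)) ⊆ W ∩ Nc G a :=
            Finset.inter_subset_left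
          have h1 := Finset.card_le_card hsb
          rw [hT3 a ha] at h1
          exact h1
        have hne3 : ((W ∩ Nc G a) ∩ (W ∩ Nc G b)).card ≠ 3 := by
          intro h3
          have he1 : (W ∩ Nc G a) ∩ (W ∩ Nc G b) = W ∩ Nc G a :=
            Finset.eq_of_subset_of_card_le Finset.inter_subset_left
              (by rw [hT3 a ha, h3])
          have hsub2 : W ∩ Nc G a ⊆ W ∩ Nc G b := by
            rw [← he1]
            exact Finset.inter_subset_right
          exact hne (Finset.eq_of_subset_of_card_le hsub2
            (by rw [hT3 a ha, hT3 b hb]))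
        have := hall2 a ha b hb
        omega
      set P : Finset V := (W ∩ Nc G a) ∩ (W ∩ Nc G b) with hPdef
      set Q : Finset V := (W ∩ Nc G a) ∪ (W ∩ Nc G b) with hQdef
      have hQ4 : Q.card = 4 := by
        have := Finset.card_union_add_card_inter (W ∩ Nc G a) (W ∩ Nc G b)
        rw [hT3 a ha, hT3 b hb, ← hPdef, ← hQdef, hPcard] at this
        omega
      have key : ∀ c ∈ T, (W ∩ Nc G c) ⊆ Q ∨ P ⊆ W ∩ Nc G c := by
        intro c hc
        by_cases hsub : W ∩ Nc G c ⊆ Q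
        · exact Or.inl hsub
        · right
          obtain ⟨w, hwSc, hwQ⟩ := Finset.not_subset.mp hsub
          have hScQ : ((W ∩ Nc G c) ∩ Q).card ≤ 2 := by
            have hsb : (W ∩ Nc G c) ∩ Q ⊆ (W ∩ Nc G c).erase w := by
              intro u hu
              rw [Finset.mem_erase]
              have h1 := Finset.mem_inter.mp hu
              exact ⟨fun he => hwQ (he ▸ h1.2), h1.1⟩
            have := Finset.card_le_card hsb
            rw [Finset.card_erase_of_mem hwSc, hT3 c hc] at this
            omega
          have hca : (W ∩ Nc G c) ∩ (W ∩ Nc G a) = (W ∩ Nc G c) ∩ Q :=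
            Finset.eq_of_subset_of_card_le
              (Finset.inter_subset_inter (le_refl _) Finset.subset_union_left)
              (le_trans hScQ (hall2 c hc a ha))
          have hcb : (W ∩ Nc G c) ∩ (W ∩ Nc G b) = (W ∩ Nc G c) ∩ Q :=
            Finset.eq_of_subset_of_card_le
              (Finset.inter_subset_inter (le_refl _) Finset.subset_union_right)
              (le_trans hScQ (hall2 c hc b hb))
          have hPQ : (W ∩ Nc G c) ∩ Q ⊆ P := by
            intro u hu
            have h1 : u ∈ (W ∩ Nc G c) ∩ (W ∩ Nc G a) := by rw [hca]; exact hu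
            have h2 : u ∈ (W ∩ Nc G c) ∩ (W ∩ Nc G b) := by rw [hcb]; exact hu
            exact Finset.mem_inter.mpr
              ⟨(Finset.mem_inter.mp h1).2, (Finset.mem_inter.mp h2).2⟩
          have hfin : (W ∩ Nc G c) ∩ Q = P :=
            Finset.eq_of_subset_of_card_le hPQ (by
              rw [hPcard, ← hca]
              exact hall2 c hc a ha)
          rw [← hfin]
          exact Finset.inter_subset_left
      by_cases hallP : ∀ c ∈ T, P ⊆ W ∩ Nc G c
      · obtain ⟨p, hp⟩ := Finset.card_pos.mp (by rw [hPcard]; omega : 0 < P.card)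
        have hpW : p ∈ W := (Finset.mem_inter.mp (Finset.mem_inter.mp hp).1).1
        refine hbig p hpW ?_
        intro x hx
        refine Finset.mem_inter.mpr ⟨hTsub hx, ?_⟩
        have : p ∈ W ∩ Nc G x := hallP x hx hp
        exact Nc_comm.mp (Finset.mem_inter.mp this).2
      · push_neg at hallP
        obtain ⟨d, hd, hPd⟩ := hallP
        have hSdQ : W ∩ Nc G d ⊆ Q := by
          rcases key d hd with h | h
          · exact h
          · exact absurd h hPd
        obtain ⟨p0, hp0P, hp0d⟩ := Finset.not_subset.mp hPd
        have hPdcard : (P ∩ (W ∩ Nc G d)).card ≤ 1 := by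
          have hsb : P ∩ (W ∩ Nc G d) ⊆ P.erase p0 := by
            intro u hu
            rw [Finset.mem_erase]
            have h1 := Finset.mem_inter.mp hu
            exact ⟨fun he => hp0d (he ▸ h1.2), h1.1⟩
          have := Finset.card_le_card hsb
          rw [Finset.card_erase_of_mem hp0P, hPcard] at this
          omega
        have hQW : Q ⊆ W := by
          intro u hu
          rcases Finset.mem_union.mp hu with hu | hu
          · exact (Finset.mem_inter.mp hu).1
          · exact (Finset.mem_inter.mp hu).1
        obtain ⟨w0, hw0⟩ := Finset.card_pos.mp (by
          rw [Finset.card_sdiff_of_subset hQW, hQ4, h9]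
          omega : 0 < (W \ Q).card)
        have hw0W : w0 ∈ W := (Finset.mem_sdiff.mp hw0).1
        have hw0Q : w0 ∉ Q := (Finset.mem_sdiff.mp hw0).2
        have hclaim : Eb v ∩ Nc G w0 ⊆ Eb v \ T := by
          intro x hx
          have hxE : x ∈ Eb v := (Finset.mem_inter.mp hx).1
          have hw0Sx : w0 ∈ W ∩ Nc G x :=
            Finset.mem_inter.mpr ⟨hw0W, Nc_comm.mp (Finset.mem_inter.mp hx).2⟩
          rw [Finset.mem_sdiff]
          refine ⟨hxE, ?_⟩
          intro hxT
          rcases key x hxT with h | h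
          · exact hw0Q (h hw0Sx)
          · have hw0P : w0 ∉ P := fun hc => hw0Q (Finset.mem_union_left _
              (Finset.mem_inter.mp hc).1)
            have hSx : insert w0 P = W ∩ Nc G x := by
              apply Finset.eq_of_subset_of_card_le
              · intro u hu
                rcases Finset.mem_insert.mp hu with rfl | hu
                · exact hw0Sx
                · exact h hu
              · rw [hT3 x hxT, Finset.card_insert_of_notMem hw0P, hPcard]
            have hsb : (W ∩ Nc G x) ∩ (W ∩ Nc G d) ⊆ P ∩ (W ∩ Nc G d) := by
              intro u hu
              have h1 := Finset.mem_inter.mp hu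
              have h2 : u ∈ insert w0 P := by rw [hSx]; exact h1.1
              rcases Finset.mem_insert.mp h2 with rfl | hu2
              · exact absurd (hSdQ h1.2) hw0Q
              · exact Finset.mem_inter.mpr ⟨hu2, h1.2⟩
            have h1 := Finset.card_le_card hsb
            have h2 := hall2 x hxT d hd
            omega
        have h1 := Finset.card_le_card hclaim
        have h2 := hmw4 w0 hw0W
        have h3 : (Eb v \ T).card = (Eb v).card - T.card := Finset.card_sdiff_of_subset hTsub
        rw [card_Eb hcard] at h3
        omega
  obtain ⟨a, ha, b, hb, hone⟩ := hstep3
  obtain ⟨z, hz⟩ := Finset.card_eq_one.mp hone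
  have hzin : z ∈ (W ∩ Nc G a) ∩ (W ∩ Nc G b) := by
    rw [hz]; exact Finset.mem_singleton_self z
  have hzSa : z ∈ W ∩ Nc G a := (Finset.mem_inter.mp hzin).1
  have hzSb : z ∈ W ∩ Nc G b := (Finset.mem_inter.mp hzin).2
  have hzW : z ∈ W := (Finset.mem_inter.mp hzSa).1
  have hcrossd : ∀ u, u ∈ W ∩ Nc G a → u ∈ W ∩ Nc G b → u = z := by
    intro u h1 h2
    have : u ∈ (W ∩ Nc G a) ∩ (W ∩ Nc G b) := Finset.mem_inter.mpr ⟨h1, h2⟩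
    rw [hz] at this
    exact Finset.mem_singleton.mp this
  have hab : a ≠ b := by
    rintro rfl
    rw [Finset.inter_self] at hz
    have h3 := hT3 a ha
    rw [hz] at h3
    simp at h3
  set U : Finset V := (W ∩ Nc G a) ∪ (W ∩ Nc G b) with hUdef
  have hU5 : U.card = 5 := by
    have h := Finset.card_union_add_card_inter (W ∩ Nc G a) (W ∩ Nc G b)
    rw [hT3 a ha, hT3 b hb, hz, Finset.card_singleton, ← hUdef] at h
    omega
  have hUW : U ⊆ W := by
    intro u hu
    rcases Finset.mem_union.mp hu with hu | hu
    · exact (Finset.mem_inter.mp hu).1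
    · exact (Finset.mem_inter.mp hu).1
  set O : Finset V := W \ U with hOdef
  have hOW : O ⊆ W := Finset.sdiff_subset
  have hO4 : O.card = 4 := by
    rw [hOdef, Finset.card_sdiff_of_subset hUW, hU5, h9]
  have hOnotU : ∀ u ∈ O, u ∉ U := fun u hu => (Finset.mem_sdiff.mp hu).2
  have hzU : z ∈ U := Finset.mem_union_left _ hzSa
  -- classes
  set Tz : Finset V := (T \ {a, b}).filter (fun x => z ∈ Nc G x) with hTzdef
  set NZ : Finset V := (T \ {a, b}).filter (fun x => ¬ z ∈ Nc G x) with hNZdef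
  set Sm : Finset V := Eb v \ T with hSmdef
  have hNZT : NZ ⊆ T := fun x hx => (Finset.mem_sdiff.mp (Finset.mem_of_mem_filter x hx)).1
  have hTzT : Tz ⊆ T := fun x hx => (Finset.mem_sdiff.mp (Finset.mem_of_mem_filter x hx)).1
  have habsubT : ({a, b} : Finset V) ⊆ T := by
    intro u hu
    rcases Finset.mem_insert.mp hu with rfl | hu
    · exact ha
    · rw [Finset.mem_singleton] at hu; subst hu; exact hb
  have hcard_ab : ({a, b} : Finset V).card = 2 := by
    rw [Finset.card_insert_of_notMem (by simp [hab]), Finset.card_singleton]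
  have hTabcard : (T \ ({a, b} : Finset V)).card = T.card - 2 := by
    rw [Finset.card_sdiff_of_subset habsubT, hcard_ab]
  have hTzNZ : Tz.card + NZ.card = T.card - 2 := by
    rw [hTzdef, hNZdef, ← hTabcard]
    exact Finset.card_filter_add_card_filter_not (p := fun x => z ∈ Nc G x)
  have hSmcard : Sm.card = 13 - T.card := by
    rw [hSmdef, Finset.card_sdiff_of_subset hTsub, card_Eb hcard]
  have hs3 : Sm.card ≤ 3 := by omega
  have hzocard : Tz.card + 2 ≤ G.degree z + 1 := by
    have hsub : insert a (insert b Tz) ⊆ Eb v ∩ Nc G z := by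
      intro x hx
      rcases Finset.mem_insert.mp hx with rfl | hx
      · exact Finset.mem_inter.mpr ⟨hTsub ha, Nc_comm.mp (Finset.mem_inter.mp hzSa).2⟩
      rcases Finset.mem_insert.mp hx with rfl | hx
      · exact Finset.mem_inter.mpr ⟨hTsub hb, Nc_comm.mp (Finset.mem_inter.mp hzSb).2⟩
      · have hxE : x ∈ Eb v := hTsub (hTzT hx)
        exact Finset.mem_inter.mpr ⟨hxE, Nc_comm.mp (Finset.mem_filter.mp hx).2⟩
    have hbTz : b ∉ Tz := fun hc =>
      (Finset.mem_sdiff.mp (Finset.mem_of_mem_filter b hc)).2 (by simp)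
    have haTz : a ∉ insert b Tz := by
      rw [Finset.mem_insert]
      push_neg
      exact ⟨hab, fun hc => (Finset.mem_sdiff.mp (Finset.mem_of_mem_filter a hc)).2 (by simp)⟩
    have hcic := Finset.card_le_card hsub
    rw [Finset.card_insert_of_notMem haTz, Finset.card_insert_of_notMem hbTz,
      card_Eb_inter_Nc (hWsub hzW)] at hcic
    omega
  have hzo3 : Tz.card ≤ 3 := by have := hΔ z; omega
  -- pointwise bounds on O-cover
  have hOab : ∀ c : V, c ∈ T → (W ∩ Nc G c) ⊆ U → O ∩ Nc G c = ∅ := by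
    intro c hc hsub
    rw [Finset.eq_empty_iff_forall_notMem]
    intro u hu
    have h1 := Finset.mem_inter.mp hu
    have huW : u ∈ W := hOW h1.1
    exact hOnotU u h1.1 (hsub (Finset.mem_inter.mpr ⟨huW, h1.2⟩))
  have hfa : O ∩ Nc G a = ∅ := hOab a ha Finset.subset_union_left
  have hfb : O ∩ Nc G b = ∅ := hOab b hb Finset.subset_union_right
  have hfTz : ∀ x : V, (O ∩ Nc G x).card ≤ 2 := by
    intro x
    have hu3 := hun3 a b x
    have hUsub : U ⊆ U ∪ (W ∩ Nc G x) := Finset.subset_union_left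
    have hsd : O ∩ Nc G x ⊆ (U ∪ (W ∩ Nc G x)) \ U := by
      intro u hu
      have h1 := Finset.mem_inter.mp hu
      have huW : u ∈ W := hOW h1.1
      rw [Finset.mem_sdiff]
      exact ⟨Finset.mem_union_right _ (Finset.mem_inter.mpr ⟨huW, h1.2⟩),
        (Finset.mem_sdiff.mp h1.1).2⟩
    have hc1 := Finset.card_le_card hsd
    have hc2 : (U ∪ (W ∩ Nc G x)).card ≤ 7 := by
      rw [hUdef]
      exact hun3 a b x
    rw [Finset.card_sdiff_of_subset hUsub] at hc1
    omega
  have hfNZ : ∀ x ∈ NZ, (O ∩ Nc G x).card ≤ 1 := by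
    intro x hx
    have hxT : x ∈ T := hNZT hx
    have hzx : ¬ z ∈ Nc G x := (Finset.mem_filter.mp hx).2
    obtain ⟨c1, hc1⟩ := hint x hxT a ha
    obtain ⟨c2, hc2⟩ := hint x hxT b hb
    have hc1x : c1 ∈ W ∩ Nc G x := (Finset.mem_inter.mp hc1).1
    have hc2x : c2 ∈ W ∩ Nc G x := (Finset.mem_inter.mp hc2).1
    have hc1a : c1 ∈ W ∩ Nc G a := (Finset.mem_inter.mp hc1).2
    have hc2b : c2 ∈ W ∩ Nc G b := (Finset.mem_inter.mp hc2).2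
    have hc12 : c1 ≠ c2 := by
      rintro rfl
      have := hcrossd c1 hc1a hc2b
      subst this
      exact hzx (Finset.mem_inter.mp hc1x).2
    have hsb : O ∩ Nc G x ⊆ (W ∩ Nc G x) \ ({c1, c2} : Finset V) := by
      intro u hu
      have h1 := Finset.mem_inter.mp hu
      have huW : u ∈ W := hOW h1.1
      rw [Finset.mem_sdiff]
      refine ⟨Finset.mem_inter.mpr ⟨huW, h1.2⟩, ?_⟩
      intro hc
      rcases Finset.mem_insert.mp hc with rfl | hc
      · exact hOnotU u h1.1 (Finset.mem_union_left _ hc1a)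
      · rw [Finset.mem_singleton] at hc
        subst hc
        exact hOnotU u h1.1 (Finset.mem_union_right _ hc2b)
    have hc12sub : ({c1, c2} : Finset V) ⊆ W ∩ Nc G x := by
      intro u hu
      rcases Finset.mem_insert.mp hu with rfl | hu
      · exact hc1x
      · rw [Finset.mem_singleton] at hu; subst hu; exact hc2x
    have hcc := Finset.card_le_card hsb
    rw [Finset.card_sdiff_of_subset hc12sub, hT3 x hxT,
      Finset.card_insert_of_notMem (by simp [hc12]), Finset.card_singleton] at hcc
    omega
  have hfSm : ∀ x ∈ Sm, (O ∩ Nc G x).card ≤ 2 := by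
    intro x hx
    have h1 : O ∩ Nc G x ⊆ W ∩ Nc G x :=
      Finset.inter_subset_inter hOW (le_refl _)
    have h2 := Finset.card_le_card h1
    have h3 := hnotT x (Finset.mem_sdiff.mp hx).1 (Finset.mem_sdiff.mp hx).2
    omega
  -- sum decomposition
  have hsumO16 : 16 ≤ ∑ x ∈ Eb v, (O ∩ Nc G x).card := by
    rw [sum_Eb v O (hOW.trans hWsub)]
    calc (16 : ℕ) = ∑ _w ∈ O, 4 := by rw [Finset.sum_const, smul_eq_mul, hO4]
    _ ≤ _ := Finset.sum_le_sum fun w _ => by have := hdeg w; omega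
  have hsplit1 : ∑ x ∈ Eb v \ T, (O ∩ Nc G x).card + ∑ x ∈ T, (O ∩ Nc G x).card
      = ∑ x ∈ Eb v, (O ∩ Nc G x).card := Finset.sum_sdiff hTsub
  have hsplit2 : ∑ x ∈ T \ ({a, b} : Finset V), (O ∩ Nc G x).card
      + ∑ x ∈ ({a, b} : Finset V), (O ∩ Nc G x).card
      = ∑ x ∈ T, (O ∩ Nc G x).card := Finset.sum_sdiff habsubT
  have hsplit3 : ∑ x ∈ ({a, b} : Finset V), (O ∩ Nc G x).card = 0 := by
    rw [Finset.sum_pair hab, hfa, hfb]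
    simp
  have hsplit4 : ∑ x ∈ Tz, (O ∩ Nc G x).card + ∑ x ∈ NZ, (O ∩ Nc G x).card
      = ∑ x ∈ T \ ({a, b} : Finset V), (O ∩ Nc G x).card := by
    rw [hTzdef, hNZdef]
    exact Finset.sum_filter_add_sum_filter_not _ (fun x => z ∈ Nc G x) _
  have hbTz : ∑ x ∈ Tz, (O ∩ Nc G x).card ≤ Tz.card * 2 := by
    have := Finset.sum_le_card_nsmul Tz (fun x => (O ∩ Nc G x).card) 2
      (fun x _ => by show (O ∩ Nc G x).card ≤ 2; exact hfTz x)
    simpa using this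
  have hbNZ : ∑ x ∈ NZ, (O ∩ Nc G x).card ≤ NZ.card * 1 := by
    have := Finset.sum_le_card_nsmul NZ (fun x => (O ∩ Nc G x).card) 1
      (fun x hx => by show (O ∩ Nc G x).card ≤ 1; exact hfNZ x hx)
    simpa using this
  have hbSm : ∑ x ∈ Sm, (O ∩ Nc G x).card ≤ Sm.card * 2 := by
    have := Finset.sum_le_card_nsmul Sm (fun x => (O ∩ Nc G x).card) 2
      (fun x hx => by show (O ∩ Nc G x).card ≤ 2; exact hfSm x hx)
    simpa using this
  rw [← hSmdef] at hsplit1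
  -- s = 3 forces all degrees 3 :
  have hdeg3 : Sm.card = 3 → ∀ w ∈ W, G.degree w + 1 = 4 := by
    intro hsm3
    have hTc : T.card = 10 := by omega
    have hup : ∑ x ∈ Eb v, (W ∩ Nc G x).card ≤ 36 := by
      have hsp : ∑ x ∈ Eb v \ T, (W ∩ Nc G x).card + ∑ x ∈ T, (W ∩ Nc G x).card
          = ∑ x ∈ Eb v, (W ∩ Nc G x).card := Finset.sum_sdiff hTsub
      have hb1 : ∑ x ∈ T, (W ∩ Nc G x).card ≤ T.card * 3 := by
        have := Finset.sum_le_card_nsmul T (fun x => (W ∩ Nc G x).card) 3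
          (fun x _ => by show (W ∩ Nc G x).card ≤ 3; exact hc3 x)
        simpa using this
      have hb2 : ∑ x ∈ Eb v \ T, (W ∩ Nc G x).card ≤ (Eb v \ T).card * 2 := by
        have := Finset.sum_le_card_nsmul (Eb v \ T) (fun x => (W ∩ Nc G x).card) 2
          (fun x hx => by
            show (W ∩ Nc G x).card ≤ 2
            exact hnotT x (Finset.mem_sdiff.mp hx).1 (Finset.mem_sdiff.mp hx).2)
        simpa using this
      rw [← hSmdef] at hb2 hsp
      omega
    rw [sum_Eb v W hWsub] at hup
    intro w hw
    exact sum_tight_ge (s := W) (f := fun w => G.degree w + 1) (c := 4)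
      (fun u _ => by show 4 ≤ G.degree u + 1; have := hdeg u; omega)
      (by show (∑ w ∈ W, (G.degree w + 1)) ≤ 4 * W.card; rw [h9]; omega) w hw
  have hzs5 : Tz.card + Sm.card ≤ 5 := by
    by_cases hsm3 : Sm.card = 3
    · have hz3 := hdeg3 hsm3 z hzW
      omega
    · omega
  -- the big pinch
  have hpinch : Tz.card + Sm.card = 5
      ∧ (∑ x ∈ Tz, (O ∩ Nc G x).card = Tz.card * 2)
      ∧ (∑ x ∈ NZ, (O ∩ Nc G x).card = NZ.card * 1)
      ∧ (∑ x ∈ Sm, (O ∩ Nc G x).card = Sm.card * 2)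
      ∧ (∑ x ∈ Eb v, (O ∩ Nc G x).card = 16) := by
    constructor
    · omega
    refine ⟨by omega, by omega, by omega, by omega⟩
  obtain ⟨hzs5', heqTz, heqNZ, heqSm, heq16⟩ := hpinch
  -- pointwise equalities
  have hONZ1 : ∀ x ∈ NZ, (O ∩ Nc G x).card = 1 :=
    sum_tight_le (fun x hx => hfNZ x hx) (by omega)
  have hOTz2 : ∀ x ∈ Tz, (O ∩ Nc G x).card = 2 :=
    sum_tight_le (fun x _ => hfTz x) (by omega)
  have hOSm2 : ∀ x ∈ Sm, (O ∩ Nc G x).card = 2 :=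
    sum_tight_le (fun x hx => hfSm x hx) (by omega)
  have hdegO : ∀ w ∈ O, G.degree w + 1 = 4 := by
    have hsono : ∑ w ∈ O, (G.degree w + 1) ≤ 16 := by
      rw [← sum_Eb v O (hOW.trans hWsub)]
      omega
    exact sum_tight_ge (fun w _ => by have := hdeg w; omega) (by rw [hO4]; omega)
  -- structures
  have hSmstruct : ∀ x ∈ Sm, W ∩ Nc G x ⊆ O := by
    intro x hx
    have h1 : O ∩ Nc G x ⊆ W ∩ Nc G x := Finset.inter_subset_inter hOW (le_refl _)
    have h2 := hnotT x (Finset.mem_sdiff.mp hx).1 (Finset.mem_sdiff.mp hx).2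
    have heq : O ∩ Nc G x = W ∩ Nc G x :=
      Finset.eq_of_subset_of_card_le h1 (by rw [hOSm2 x hx]; omega)
    rw [← heq]
    exact Finset.inter_subset_left
  have hTzstruct : ∀ x ∈ Tz, W ∩ Nc G x = insert z (O ∩ Nc G x) := by
    intro x hx
    have hzx : z ∈ Nc G x := (Finset.mem_filter.mp hx).2
    have hzSx : z ∈ W ∩ Nc G x := Finset.mem_inter.mpr ⟨hzW, hzx⟩
    have hzO : z ∉ O ∩ Nc G x := fun hc => hOnotU z (Finset.mem_inter.mp hc).1 hzU
    symm
    apply Finset.eq_of_subset_of_card_le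
    · intro u hu
      rcases Finset.mem_insert.mp hu with rfl | hu
      · exact hzSx
      · exact Finset.mem_inter.mpr
          ⟨hOW (Finset.mem_inter.mp hu).1, (Finset.mem_inter.mp hu).2⟩
    · rw [hT3 x (hTzT hx), Finset.card_insert_of_notMem hzO, hOTz2 x hx]

  -- the pairs {a1,a2} ⊆ N(a) and {b1,b2} ⊆ N(b)
  obtain ⟨a1, a2, ha12, hSaE⟩ := Finset.card_eq_two.mp
    (show ((W ∩ Nc G a).erase z).card = 2 by
      rw [Finset.card_erase_of_mem hzSa, hT3 a ha])
  obtain ⟨b1, b2, hb12, hSbE⟩ := Finset.card_eq_two.mp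
    (show ((W ∩ Nc G b).erase z).card = 2 by
      rw [Finset.card_erase_of_mem hzSb, hT3 b hb])
  have ha1E : a1 ∈ (W ∩ Nc G a).erase z := by rw [hSaE]; simp
  have ha2E : a2 ∈ (W ∩ Nc G a).erase z := by rw [hSaE]; simp
  have ha1Sa : a1 ∈ W ∩ Nc G a := Finset.mem_of_mem_erase ha1E
  have ha2Sa : a2 ∈ W ∩ Nc G a := Finset.mem_of_mem_erase ha2E
  have ha1U : a1 ∈ U := Finset.mem_union_left _ ha1Sa
  have ha2U : a2 ∈ U := Finset.mem_union_left _ ha2Sa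
  have ha1W : a1 ∈ W := (Finset.mem_inter.mp ha1Sa).1
  have ha2W : a2 ∈ W := (Finset.mem_inter.mp ha2Sa).1
  have ha1z : a1 ≠ z := (Finset.mem_erase.mp ha1E).1
  have ha2z : a2 ≠ z := (Finset.mem_erase.mp ha2E).1
  have hainbj : ∀ u u' : V, u ∈ (W ∩ Nc G a).erase z → u' ∈ (W ∩ Nc G b).erase z →
      u ≠ u' := by
    intro u u' hu hu' he
    subst he
    exact (Finset.mem_erase.mp hu).1
      (hcrossd u (Finset.mem_of_mem_erase hu) (Finset.mem_of_mem_erase hu'))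
  have hOne : ∀ o u : V, o ∈ O → u ∈ U → u ≠ o := by
    intro o u hoO huU he
    exact hOnotU o hoO (he ▸ huU)
  -- each NZ-triple contains exactly one of a1,a2 and one of b1,b2
  have hexA : ∀ x ∈ NZ, ∃ u, u ∈ (W ∩ Nc G a).erase z ∧ u ∈ Nc G x := by
    intro x hx
    obtain ⟨c1, hc1⟩ := hint x (hNZT hx) a ha
    have hc1x : c1 ∈ W ∩ Nc G x := (Finset.mem_inter.mp hc1).1
    have hc1a : c1 ∈ W ∩ Nc G a := (Finset.mem_inter.mp hc1).2
    have hc1z : c1 ≠ z := by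
      rintro rfl
      exact (Finset.mem_filter.mp hx).2 (Finset.mem_inter.mp hc1x).2
    exact ⟨c1, Finset.mem_erase.mpr ⟨hc1z, hc1a⟩, (Finset.mem_inter.mp hc1x).2⟩
  have hexB : ∀ x ∈ NZ, ∃ u, u ∈ (W ∩ Nc G b).erase z ∧ u ∈ Nc G x := by
    intro x hx
    obtain ⟨c1, hc1⟩ := hint x (hNZT hx) b hb
    have hc1x : c1 ∈ W ∩ Nc G x := (Finset.mem_inter.mp hc1).1
    have hc1b : c1 ∈ W ∩ Nc G b := (Finset.mem_inter.mp hc1).2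
    have hc1z : c1 ≠ z := by
      rintro rfl
      exact (Finset.mem_filter.mp hx).2 (Finset.mem_inter.mp hc1x).2
    exact ⟨c1, Finset.mem_erase.mpr ⟨hc1z, hc1b⟩, (Finset.mem_inter.mp hc1x).2⟩
  -- triple structure for NZ members
  have hSx3 : ∀ x ∈ NZ, ∀ u u' : V, u ∈ (W ∩ Nc G a).erase z → u' ∈ (W ∩ Nc G b).erase z →
      u ∈ Nc G x → u' ∈ Nc G x → ∀ o ∈ O ∩ Nc G x, W ∩ Nc G x = {u, u', o} := by
    intro x hx u u' hu hu' hux hu'x o ho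
    have hoO : o ∈ O := (Finset.mem_inter.mp ho).1
    have huu' : u ≠ u' := hainbj u u' hu hu'
    have huo : u ≠ o := hOne o u hoO (Finset.mem_union_left _ (Finset.mem_of_mem_erase hu))
    have hu'o : u' ≠ o := hOne o u' hoO (Finset.mem_union_right _ (Finset.mem_of_mem_erase hu'))
    have hcard3 : ({u, u', o} : Finset V).card = 3 := by
      rw [Finset.card_insert_of_notMem (by
          simp only [Finset.mem_insert, Finset.mem_singleton]
          push_neg
          exact ⟨huu', huo⟩),
        Finset.card_insert_of_notMem (by simp only [Finset.mem_singleton]; exact hu'o),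
        Finset.card_singleton]
    symm
    apply Finset.eq_of_subset_of_card_le
    · intro w hw
      rcases Finset.mem_insert.mp hw with rfl | hw
      · exact Finset.mem_inter.mpr
          ⟨(Finset.mem_inter.mp (Finset.mem_of_mem_erase hu)).1, hux⟩
      rcases Finset.mem_insert.mp hw with rfl | hw
      · exact Finset.mem_inter.mpr
          ⟨(Finset.mem_inter.mp (Finset.mem_of_mem_erase hu')).1, hu'x⟩
      · rw [Finset.mem_singleton] at hw
        subst hw
        exact Finset.mem_inter.mpr ⟨hOW hoO, (Finset.mem_inter.mp ho).2⟩
    · rw [hcard3, hT3 x (hNZT hx)]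
  have honeA : ∀ x ∈ NZ, ¬ (a1 ∈ Nc G x ∧ a2 ∈ Nc G x) := by
    rintro x hx ⟨h1, h2⟩
    obtain ⟨β, hβE, hβx⟩ := hexB x hx
    obtain ⟨o, ho⟩ := Finset.card_pos.mp (by rw [hONZ1 x hx]; omega : 0 < (O ∩ Nc G x).card)
    have hS1 := hSx3 x hx a1 β ha1E hβE h1 hβx o ho
    have hS2 := hSx3 x hx a2 β ha2E hβE h2 hβx o ho
    have : a2 ∈ ({a1, β, o} : Finset V) := by
      rw [← hS1, hS2]
      simp
    rcases Finset.mem_insert.mp this with h | h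
    · exact ha12 h.symm
    rcases Finset.mem_insert.mp h with h | h
    · exact hainbj a2 β ha2E hβE h
    · rw [Finset.mem_singleton] at h
      exact hOne o a2 (Finset.mem_inter.mp ho).1 ha2U h
  -- the final contradiction machine
  have blow : ∀ q1 q2 : V, q1 ≠ q2 → (W ∩ Nc G b).erase z = {q1, q2} →
      2 ≤ (NZ.filter (fun x => a1 ∈ Nc G x ∧ q1 ∈ Nc G x)).card →
      2 ≤ (NZ.filter (fun x => a2 ∈ Nc G x ∧ q2 ∈ Nc G x)).card → False := by
    intro q1 q2 hq12 hqE h2a h2b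
    have hq1E : q1 ∈ (W ∩ Nc G b).erase z := by rw [hqE]; simp
    have hq2E : q2 ∈ (W ∩ Nc G b).erase z := by rw [hqE]; simp
    have hq1Sb : q1 ∈ W ∩ Nc G b := Finset.mem_of_mem_erase hq1E
    have hq2Sb : q2 ∈ W ∩ Nc G b := Finset.mem_of_mem_erase hq2E
    have hq1U : q1 ∈ U := Finset.mem_union_right _ hq1Sb
    have hq2U : q2 ∈ U := Finset.mem_union_right _ hq2Sb
    have hq1W : q1 ∈ W := (Finset.mem_inter.mp hq1Sb).1
    have hq2W : q2 ∈ W := (Finset.mem_inter.mp hq2Sb).1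
    have hq1z : q1 ≠ z := (Finset.mem_erase.mp hq1E).1
    have hq2z : q2 ≠ z := (Finset.mem_erase.mp hq2E).1
    set N1 : Finset V := NZ.filter (fun x => a1 ∈ Nc G x ∧ q1 ∈ Nc G x) with hN1def
    set N2 : Finset V := NZ.filter (fun x => a2 ∈ Nc G x ∧ q2 ∈ Nc G x) with hN2def
    have hN1NZ : N1 ⊆ NZ := Finset.filter_subset _ _
    have hN2NZ : N2 ⊆ NZ := Finset.filter_subset _ _
    -- members of N1 / N2 share their O-element
    have hstructN1 : ∀ x ∈ N1, ∀ o ∈ O ∩ Nc G x, W ∩ Nc G x = {a1, q1, o} := by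
      intro x hx o ho
      have h := (Finset.mem_filter.mp hx).2
      exact hSx3 x (hN1NZ hx) a1 q1 ha1E hq1E h.1 h.2 o ho
    have hstructN2 : ∀ x ∈ N2, ∀ o ∈ O ∩ Nc G x, W ∩ Nc G x = {a2, q2, o} := by
      intro x hx o ho
      have h := (Finset.mem_filter.mp hx).2
      exact hSx3 x (hN2NZ hx) a2 q2 ha2E hq2E h.1 h.2 o ho
    have hcross' : ∀ x ∈ N1, ∀ y ∈ N2, O ∩ Nc G x = O ∩ Nc G y := by
      intro x hx y hy
      obtain ⟨ox, hox⟩ := Finset.card_eq_one.mp (hONZ1 x (hN1NZ hx))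
      obtain ⟨oy, hoy⟩ := Finset.card_eq_one.mp (hONZ1 y (hN2NZ hy))
      have hoxm : ox ∈ O ∩ Nc G x := by rw [hox]; simp
      have hoym : oy ∈ O ∩ Nc G y := by rw [hoy]; simp
      have hoxO : ox ∈ O := (Finset.mem_inter.mp hoxm).1
      have hoyO : oy ∈ O := (Finset.mem_inter.mp hoym).1
      have hSx := hstructN1 x hx ox hoxm
      have hSy := hstructN2 y hy oy hoym
      obtain ⟨c, hcmem⟩ := hint x (hNZT (hN1NZ hx)) y (hNZT (hN2NZ hy))
      have hcx : c ∈ W ∩ Nc G x := (Finset.mem_inter.mp hcmem).1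
      have hcy : c ∈ W ∩ Nc G y := (Finset.mem_inter.mp hcmem).2
      rw [hSx] at hcx
      rw [hSy] at hcy
      have hceq : c = ox := by
        rcases Finset.mem_insert.mp hcx with h1 | h1
        · exfalso
          rcases Finset.mem_insert.mp hcy with h2 | h2
          · exact ha12 (h1.symm.trans h2)
          rcases Finset.mem_insert.mp h2 with h3 | h3
          · exact hainbj a1 q2 ha1E hq2E (h1.symm.trans h3)
          · rw [Finset.mem_singleton] at h3
            exact hOne oy a1 hoyO ha1U (h1.symm.trans h3)
        rcases Finset.mem_insert.mp h1 with h1 | h1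
        · exfalso
          rcases Finset.mem_insert.mp hcy with h2 | h2
          · exact hainbj a2 q1 ha2E hq1E (h2.symm.trans h1)
          rcases Finset.mem_insert.mp h2 with h3 | h3
          · exact hq12 (h1.symm.trans h3)
          · rw [Finset.mem_singleton] at h3
            exact hOne oy q1 hoyO hq1U (h1.symm.trans h3)
        · exact Finset.mem_singleton.mp h1
      rw [hceq] at hcy
      have hfin : ox = oy := by
        rcases Finset.mem_insert.mp hcy with h | h
        · exact absurd h.symm (hOne ox a2 hoxO ha2U)
        rcases Finset.mem_insert.mp h with h | h
        · exact absurd h.symm (hOne ox q2 hoxO hq2U)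
        · exact Finset.mem_singleton.mp h
      rw [hox, hoy, hfin]
    -- pick base points
    obtain ⟨x0, hx0⟩ := Finset.card_pos.mp (by omega : 0 < N1.card)
    obtain ⟨y0, hy0⟩ := Finset.card_pos.mp (by omega : 0 < N2.card)
    obtain ⟨o₀, ho₀⟩ := Finset.card_eq_one.mp (hONZ1 x0 (hN1NZ hx0))
    have ho₀m : o₀ ∈ O ∩ Nc G x0 := by rw [ho₀]; simp
    have ho₀O : o₀ ∈ O := (Finset.mem_inter.mp ho₀m).1
    have ho₀W : o₀ ∈ W := hOW ho₀O
    -- all of N1 ∪ N2 is adjacent to o₀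
    have hsubo : N1 ∪ N2 ⊆ Eb v ∩ Nc G o₀ := by
      intro u hu
      have hucov : o₀ ∈ O ∩ Nc G u := by
        rcases Finset.mem_union.mp hu with hu' | hu'
        · have h1 := hcross' u hu' y0 hy0
          have h2 := hcross' x0 hx0 y0 hy0
          rw [h1, ← h2]
          exact ho₀m
        · rw [← hcross' x0 hx0 u hu']
          exact ho₀m
      have huEb : u ∈ Eb v := by
        rcases Finset.mem_union.mp hu with hu' | hu'
        · exact hTsub (hNZT (hN1NZ hu'))
        · exact hTsub (hNZT (hN2NZ hu'))
      exact Finset.mem_inter.mpr ⟨huEb, Nc_comm.mp (Finset.mem_inter.mp hucov).2⟩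
    have hdisjN : Disjoint N1 N2 := by
      rw [Finset.disjoint_left]
      intro x hx1 hx2
      exact honeA x (hN1NZ hx1)
        ⟨(Finset.mem_filter.mp hx1).2.1, (Finset.mem_filter.mp hx2).2.1⟩
    have hcard4 : 4 ≤ (N1 ∪ N2).card := by
      rw [Finset.card_union_of_disjoint hdisjN]
      omega
    have ho₀card : (Eb v ∩ Nc G o₀).card = 4 := by
      rw [card_Eb_inter_Nc (hWsub ho₀W)]
      exact hdegO o₀ ho₀O
    have heqN : N1 ∪ N2 = Eb v ∩ Nc G o₀ :=
      Finset.eq_of_subset_of_card_le hsubo (by omega)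
    -- a z-triple avoiding o₀
    obtain ⟨c, hcTz⟩ := Finset.card_pos.mp (by omega : 0 < Tz.card)
    have hcT : c ∈ T := hTzT hcTz
    have hcEb : c ∈ Eb v := hTsub hcT
    have hzc : z ∈ Nc G c := (Finset.mem_filter.mp hcTz).2
    have hcNN : c ∉ N1 ∪ N2 := by
      intro hc'
      have hcNZ : c ∈ NZ := by
        rcases Finset.mem_union.mp hc' with h | h
        · exact hN1NZ h
        · exact hN2NZ h
      exact (Finset.mem_filter.mp hcNZ).2 hzc
    have hco₀ : o₀ ∉ Nc G c := by
      intro hmem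
      exact hcNN (heqN ▸ Finset.mem_inter.mpr ⟨hcEb, Nc_comm.mp hmem⟩)
    obtain ⟨o, o', hoo', hOc⟩ := Finset.card_eq_two.mp (hOTz2 c hcTz)
    have hom : o ∈ O ∩ Nc G c := by rw [hOc]; simp
    have ho'm : o' ∈ O ∩ Nc G c := by rw [hOc]; simp
    have hoO : o ∈ O := (Finset.mem_inter.mp hom).1
    have ho'O : o' ∈ O := (Finset.mem_inter.mp ho'm).1
    have honeo : o ≠ o₀ := by
      rintro rfl
      exact hco₀ (Finset.mem_inter.mp hom).2
    have honeo' : o' ≠ o₀ := by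
      rintro rfl
      exact hco₀ (Finset.mem_inter.mp ho'm).2
    -- the explicit 8-element set
    have hcx0 := (Finset.mem_filter.mp hx0).2
    have hcy0 := (Finset.mem_filter.mp hy0).2
    have ha1q1 : a1 ≠ q1 := hainbj a1 q1 ha1E hq1E
    have ha1q2 : a1 ≠ q2 := hainbj a1 q2 ha1E hq2E
    have ha2q1 : a2 ≠ q1 := hainbj a2 q1 ha2E hq1E
    have ha2q2 : a2 ≠ q2 := hainbj a2 q2 ha2E hq2E
    have ha1o₀ : a1 ≠ o₀ := hOne o₀ a1 ho₀O ha1U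
    have ha2o₀ : a2 ≠ o₀ := hOne o₀ a2 ho₀O ha2U
    have hq1o₀ : q1 ≠ o₀ := hOne o₀ q1 ho₀O hq1U
    have hq2o₀ : q2 ≠ o₀ := hOne o₀ q2 ho₀O hq2U
    have ha1o : a1 ≠ o := hOne o a1 hoO ha1U
    have ha2o : a2 ≠ o := hOne o a2 hoO ha2U
    have hq1o : q1 ≠ o := hOne o q1 hoO hq1U
    have hq2o : q2 ≠ o := hOne o q2 hoO hq2U
    have ha1o' : a1 ≠ o' := hOne o' a1 ho'O ha1U
    have ha2o' : a2 ≠ o' := hOne o' a2 ho'O ha2U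
    have hq1o' : q1 ≠ o' := hOne o' q1 ho'O hq1U
    have hq2o' : q2 ≠ o' := hOne o' q2 ho'O hq2U
    have hzo₀ : z ≠ o₀ := hOne o₀ z ho₀O hzU
    have hzo : z ≠ o := hOne o z hoO hzU
    have hzo' : z ≠ o' := hOne o' z ho'O hzU
    have hza1 : z ≠ a1 := ha1z.symm
    have hza2 : z ≠ a2 := ha2z.symm
    have hzq1 : z ≠ q1 := hq1z.symm
    have hzq2 : z ≠ q2 := hq2z.symm
    have ho₀o : o₀ ≠ o := honeo.symm
    have ho₀o' : o₀ ≠ o' := honeo'.symm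
    have hYsub : ({a1, q1, a2, q2, z, o₀, o, o'} : Finset V)
        ⊆ W ∩ (Nc G x0 ∪ Nc G y0 ∪ Nc G c) := by
      intro u hu
      simp only [Finset.mem_insert, Finset.mem_singleton] at hu
      rcases hu with rfl | rfl | rfl | rfl | rfl | rfl | rfl | rfl
      · exact Finset.mem_inter.mpr ⟨ha1W,
          Finset.mem_union_left _ (Finset.mem_union_left _ hcx0.1)⟩
      · exact Finset.mem_inter.mpr ⟨hq1W,
          Finset.mem_union_left _ (Finset.mem_union_left _ hcx0.2)⟩
      · exact Finset.mem_inter.mpr ⟨ha2W,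
          Finset.mem_union_left _ (Finset.mem_union_right _ hcy0.1)⟩
      · exact Finset.mem_inter.mpr ⟨hq2W,
          Finset.mem_union_left _ (Finset.mem_union_right _ hcy0.2)⟩
      · exact Finset.mem_inter.mpr ⟨hzW, Finset.mem_union_right _ hzc⟩
      · exact Finset.mem_inter.mpr ⟨ho₀W,
          Finset.mem_union_left _ (Finset.mem_union_left _ (Finset.mem_inter.mp ho₀m).2)⟩
      · exact Finset.mem_inter.mpr ⟨hOW hoO,
          Finset.mem_union_right _ (Finset.mem_inter.mp hom).2⟩
      · exact Finset.mem_inter.mpr ⟨hOW ho'O,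
          Finset.mem_union_right _ (Finset.mem_inter.mp ho'm).2⟩
    have hm1 : a1 ∉ ({q1, a2, q2, z, o₀, o, o'} : Finset V) := by
      simp only [Finset.mem_insert, Finset.mem_singleton]
      push_neg
      exact ⟨ha1q1, ha12, ha1q2, ha1z, ha1o₀, ha1o, ha1o'⟩
    have hm2 : q1 ∉ ({a2, q2, z, o₀, o, o'} : Finset V) := by
      simp only [Finset.mem_insert, Finset.mem_singleton]
      push_neg
      exact ⟨ha2q1.symm, hq12, hq1z, hq1o₀, hq1o, hq1o'⟩
    have hm3 : a2 ∉ ({q2, z, o₀, o, o'} : Finset V) := by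
      simp only [Finset.mem_insert, Finset.mem_singleton]
      push_neg
      exact ⟨ha2q2, ha2z, ha2o₀, ha2o, ha2o'⟩
    have hm4 : q2 ∉ ({z, o₀, o, o'} : Finset V) := by
      simp only [Finset.mem_insert, Finset.mem_singleton]
      push_neg
      exact ⟨hq2z, hq2o₀, hq2o, hq2o'⟩
    have hm5 : z ∉ ({o₀, o, o'} : Finset V) := by
      simp only [Finset.mem_insert, Finset.mem_singleton]
      push_neg
      exact ⟨hzo₀, hzo, hzo'⟩
    have hm6 : o₀ ∉ ({o, o'} : Finset V) := by
      simp only [Finset.mem_insert, Finset.mem_singleton]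
      push_neg
      exact ⟨ho₀o, ho₀o'⟩
    have hm7 : o ∉ ({o'} : Finset V) := by
      simp only [Finset.mem_singleton]
      exact hoo'
    have hY8 : ({a1, q1, a2, q2, z, o₀, o, o'} : Finset V).card = 8 := by
      rw [Finset.card_insert_of_notMem hm1, Finset.card_insert_of_notMem hm2,
        Finset.card_insert_of_notMem hm3, Finset.card_insert_of_notMem hm4,
        Finset.card_insert_of_notMem hm5, Finset.card_insert_of_notMem hm6,
        Finset.card_insert_of_notMem hm7, Finset.card_singleton]
    have hfinal := Finset.card_le_card hYsub
    rw [hY8] at hfinal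
    exact absurd hfinal (by have := hcon x0 y0 c; omega)
  -- more facts about b1, b2
  have hb1E : b1 ∈ (W ∩ Nc G b).erase z := by rw [hSbE]; simp
  have hb2E : b2 ∈ (W ∩ Nc G b).erase z := by rw [hSbE]; simp
  have hb1Sb : b1 ∈ W ∩ Nc G b := Finset.mem_of_mem_erase hb1E
  have hb2Sb : b2 ∈ W ∩ Nc G b := Finset.mem_of_mem_erase hb2E
  have hb1U : b1 ∈ U := Finset.mem_union_right _ hb1Sb
  have hb2U : b2 ∈ U := Finset.mem_union_right _ hb2Sb
  have honeB : ∀ x ∈ NZ, ¬ (b1 ∈ Nc G x ∧ b2 ∈ Nc G x) := by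
    rintro x hx ⟨h1, h2⟩
    obtain ⟨α, hαE, hαx⟩ := hexA x hx
    obtain ⟨o, ho⟩ := Finset.card_pos.mp (by rw [hONZ1 x hx]; omega : 0 < (O ∩ Nc G x).card)
    have hS1 := hSx3 x hx α b1 hαE hb1E hαx h1 o ho
    have hS2 := hSx3 x hx α b2 hαE hb2E hαx h2 o ho
    have : b2 ∈ ({α, b1, o} : Finset V) := by
      rw [← hS1, hS2]
      simp
    rcases Finset.mem_insert.mp this with h | h
    · exact hainbj α b2 hαE hb2E h.symm
    rcases Finset.mem_insert.mp h with h | h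
    · exact hb12 h.symm
    · rw [Finset.mem_singleton] at h
      exact hOne o b2 (Finset.mem_inter.mp ho).1 hb2U h
  -- classification of Eb
  have hclassify : ∀ x ∈ Eb v, x = a ∨ x = b ∨ x ∈ Tz ∨ x ∈ NZ ∨ x ∈ Sm := by
    intro x hx
    by_cases hT : x ∈ T
    · by_cases hxa : x = a
      · exact Or.inl hxa
      by_cases hxb : x = b
      · exact Or.inr (Or.inl hxb)
      have hx' : x ∈ T \ ({a, b} : Finset V) := Finset.mem_sdiff.mpr ⟨hT, by
        simp only [Finset.mem_insert, Finset.mem_singleton]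
        push_neg
        exact ⟨hxa, hxb⟩⟩
      by_cases hz' : z ∈ Nc G x
      · exact Or.inr (Or.inr (Or.inl (Finset.mem_filter.mpr ⟨hx', hz'⟩)))
      · exact Or.inr (Or.inr (Or.inr (Or.inl (Finset.mem_filter.mpr ⟨hx', hz'⟩))))
    · exact Or.inr (Or.inr (Or.inr (Or.inr (Finset.mem_sdiff.mpr ⟨hx, hT⟩))))
  -- membership counts
  have hmcA : ∀ u, u ∈ (W ∩ Nc G a).erase z →
      3 ≤ (NZ.filter (fun x => u ∈ Nc G x)).card := by
    intro u hu
    have huSa : u ∈ W ∩ Nc G a := Finset.mem_of_mem_erase hu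
    have huz : u ≠ z := (Finset.mem_erase.mp hu).1
    have huW : u ∈ W := (Finset.mem_inter.mp huSa).1
    have huU : u ∈ U := Finset.mem_union_left _ huSa
    have hsub : Eb v ∩ Nc G u ⊆ insert a (NZ.filter (fun x => u ∈ Nc G x)) := by
      intro x hx
      have hxE : x ∈ Eb v := (Finset.mem_inter.mp hx).1
      have huNx : u ∈ Nc G x := Nc_comm.mp (Finset.mem_inter.mp hx).2
      have huSx : u ∈ W ∩ Nc G x := Finset.mem_inter.mpr ⟨huW, huNx⟩
      rcases hclassify x hxE with rfl | rfl | hxTz | hxNZ | hxSm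
      · exact Finset.mem_insert_self _ _
      · exact absurd (hcrossd u huSa huSx) huz
      · exfalso
        rw [hTzstruct x hxTz] at huSx
        rcases Finset.mem_insert.mp huSx with h | h
        · exact huz h
        · exact hOnotU u (Finset.mem_inter.mp h).1 huU
      · exact Finset.mem_insert_of_mem (Finset.mem_filter.mpr ⟨hxNZ, huNx⟩)
      · exact absurd huU (hOnotU u (hSmstruct x hxSm huSx))
    have h4 := hmw4 u huW
    have hcle := Finset.card_le_card hsub
    have hci := Finset.card_insert_le a (NZ.filter (fun x => u ∈ Nc G x))
    omega
  have hmcB : ∀ u, u ∈ (W ∩ Nc G b).erase z →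
      3 ≤ (NZ.filter (fun x => u ∈ Nc G x)).card := by
    intro u hu
    have huSb : u ∈ W ∩ Nc G b := Finset.mem_of_mem_erase hu
    have huz : u ≠ z := (Finset.mem_erase.mp hu).1
    have huW : u ∈ W := (Finset.mem_inter.mp huSb).1
    have huU : u ∈ U := Finset.mem_union_right _ huSb
    have hsub : Eb v ∩ Nc G u ⊆ insert b (NZ.filter (fun x => u ∈ Nc G x)) := by
      intro x hx
      have hxE : x ∈ Eb v := (Finset.mem_inter.mp hx).1
      have huNx : u ∈ Nc G x := Nc_comm.mp (Finset.mem_inter.mp hx).2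
      have huSx : u ∈ W ∩ Nc G x := Finset.mem_inter.mpr ⟨huW, huNx⟩
      rcases hclassify x hxE with rfl | rfl | hxTz | hxNZ | hxSm
      · exact absurd (hcrossd u huSx huSb) huz
      · exact Finset.mem_insert_self _ _
      · exfalso
        rw [hTzstruct x hxTz] at huSx
        rcases Finset.mem_insert.mp huSx with h | h
        · exact huz h
        · exact hOnotU u (Finset.mem_inter.mp h).1 huU
      · exact Finset.mem_insert_of_mem (Finset.mem_filter.mpr ⟨hxNZ, huNx⟩)
      · exact absurd huU (hOnotU u (hSmstruct x hxSm huSx))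
    have h4 := hmw4 u huW
    have hcle := Finset.card_le_card hsub
    have hci := Finset.card_insert_le b (NZ.filter (fun x => u ∈ Nc G x))
    omega
  have hNZ6 : NZ.card = 6 := by omega
  -- partitions
  have hexA' : ∀ x ∈ NZ, a1 ∈ Nc G x ∨ a2 ∈ Nc G x := by
    intro x hx
    obtain ⟨u, huE, hux⟩ := hexA x hx
    rw [hSaE] at huE
    rcases Finset.mem_insert.mp huE with rfl | h
    · exact Or.inl hux
    · rw [Finset.mem_singleton] at h
      subst h
      exact Or.inr hux
  have hexB' : ∀ x ∈ NZ, b1 ∈ Nc G x ∨ b2 ∈ Nc G x := by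
    intro x hx
    obtain ⟨u, huE, hux⟩ := hexB x hx
    rw [hSbE] at huE
    rcases Finset.mem_insert.mp huE with rfl | h
    · exact Or.inl hux
    · rw [Finset.mem_singleton] at h
      subst h
      exact Or.inr hux
  have hsplitA : (NZ.filter (fun x => a1 ∈ Nc G x)).card
      + (NZ.filter (fun x => a2 ∈ Nc G x)).card = 6 := by
    have hcongr : NZ.filter (fun x => a2 ∈ Nc G x)
        = NZ.filter (fun x => ¬ a1 ∈ Nc G x) := by
      apply Finset.filter_congr
      intro x hx
      constructor
      · intro h2 h1
        exact honeA x hx ⟨h1, h2⟩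
      · intro h1
        rcases hexA' x hx with h | h
        · exact absurd h h1
        · exact h
    rw [hcongr, ← hNZ6]
    exact Finset.card_filter_add_card_filter_not (p := fun x => a1 ∈ Nc G x)
  have hNa1 : (NZ.filter (fun x => a1 ∈ Nc G x)).card = 3 := by
    have h1 := hmcA a1 ha1E
    have h2 := hmcA a2 ha2E
    omega
  have hNa2 : (NZ.filter (fun x => a2 ∈ Nc G x)).card = 3 := by
    have h1 := hmcA a1 ha1E
    omega
  have hNb1 : (NZ.filter (fun x => b1 ∈ Nc G x)).card = 3 := by
    have hcongr : NZ.filter (fun x => b2 ∈ Nc G x)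
        = NZ.filter (fun x => ¬ b1 ∈ Nc G x) := by
      apply Finset.filter_congr
      intro x hx
      constructor
      · intro h2 h1
        exact honeB x hx ⟨h1, h2⟩
      · intro h1
        rcases hexB' x hx with h | h
        · exact absurd h h1
        · exact h
    have hsp : (NZ.filter (fun x => b1 ∈ Nc G x)).card
        + (NZ.filter (fun x => b2 ∈ Nc G x)).card = 6 := by
      rw [hcongr, ← hNZ6]
      exact Finset.card_filter_add_card_filter_not (p := fun x => b1 ∈ Nc G x)
    have h1 := hmcB b1 hb1E
    have h2 := hmcB b2 hb2E
    omega
  -- rows and columns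
  have hrow1 : (NZ.filter (fun x => a1 ∈ Nc G x ∧ b1 ∈ Nc G x)).card
      + (NZ.filter (fun x => a1 ∈ Nc G x ∧ b2 ∈ Nc G x)).card = 3 := by
    have hff1 : (NZ.filter (fun x => a1 ∈ Nc G x)).filter (fun x => b1 ∈ Nc G x)
        = NZ.filter (fun x => a1 ∈ Nc G x ∧ b1 ∈ Nc G x) := Finset.filter_filter _ _ _
    have hff2 : (NZ.filter (fun x => a1 ∈ Nc G x)).filter (fun x => b2 ∈ Nc G x)
        = NZ.filter (fun x => a1 ∈ Nc G x ∧ b2 ∈ Nc G x) := Finset.filter_filter _ _ _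
    have hcongr : (NZ.filter (fun x => a1 ∈ Nc G x)).filter (fun x => b2 ∈ Nc G x)
        = (NZ.filter (fun x => a1 ∈ Nc G x)).filter (fun x => ¬ b1 ∈ Nc G x) := by
      apply Finset.filter_congr
      intro x hx
      have hxNZ : x ∈ NZ := Finset.mem_of_mem_filter x hx
      constructor
      · intro h2 h1
        exact honeB x hxNZ ⟨h1, h2⟩
      · intro h1
        rcases hexB' x hxNZ with h | h
        · exact absurd h h1
        · exact h
    have hsp : ((NZ.filter (fun x => a1 ∈ Nc G x)).filter (fun x => b1 ∈ Nc G x)).card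
        + ((NZ.filter (fun x => a1 ∈ Nc G x)).filter (fun x => ¬ b1 ∈ Nc G x)).card
        = (NZ.filter (fun x => a1 ∈ Nc G x)).card :=
      Finset.card_filter_add_card_filter_not (p := fun x => b1 ∈ Nc G x)
    rw [← hff1, ← hff2, hcongr, hsp, hNa1]
  have hrow2 : (NZ.filter (fun x => a2 ∈ Nc G x ∧ b1 ∈ Nc G x)).card
      + (NZ.filter (fun x => a2 ∈ Nc G x ∧ b2 ∈ Nc G x)).card = 3 := by
    have hff1 : (NZ.filter (fun x => a2 ∈ Nc G x)).filter (fun x => b1 ∈ Nc G x)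
        = NZ.filter (fun x => a2 ∈ Nc G x ∧ b1 ∈ Nc G x) := Finset.filter_filter _ _ _
    have hff2 : (NZ.filter (fun x => a2 ∈ Nc G x)).filter (fun x => b2 ∈ Nc G x)
        = NZ.filter (fun x => a2 ∈ Nc G x ∧ b2 ∈ Nc G x) := Finset.filter_filter _ _ _
    have hcongr : (NZ.filter (fun x => a2 ∈ Nc G x)).filter (fun x => b2 ∈ Nc G x)
        = (NZ.filter (fun x => a2 ∈ Nc G x)).filter (fun x => ¬ b1 ∈ Nc G x) := by
      apply Finset.filter_congr
      intro x hx
      have hxNZ : x ∈ NZ := Finset.mem_of_mem_filter x hx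
      constructor
      · intro h2 h1
        exact honeB x hxNZ ⟨h1, h2⟩
      · intro h1
        rcases hexB' x hxNZ with h | h
        · exact absurd h h1
        · exact h
    have hsp : ((NZ.filter (fun x => a2 ∈ Nc G x)).filter (fun x => b1 ∈ Nc G x)).card
        + ((NZ.filter (fun x => a2 ∈ Nc G x)).filter (fun x => ¬ b1 ∈ Nc G x)).card
        = (NZ.filter (fun x => a2 ∈ Nc G x)).card :=
      Finset.card_filter_add_card_filter_not (p := fun x => b1 ∈ Nc G x)
    rw [← hff1, ← hff2, hcongr, hsp, hNa2]
  have hcol1 : (NZ.filter (fun x => a1 ∈ Nc G x ∧ b1 ∈ Nc G x)).card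
      + (NZ.filter (fun x => a2 ∈ Nc G x ∧ b1 ∈ Nc G x)).card = 3 := by
    have hff1 : (NZ.filter (fun x => b1 ∈ Nc G x)).filter (fun x => a1 ∈ Nc G x)
        = NZ.filter (fun x => b1 ∈ Nc G x ∧ a1 ∈ Nc G x) := Finset.filter_filter _ _ _
    have hff2 : (NZ.filter (fun x => b1 ∈ Nc G x)).filter (fun x => a2 ∈ Nc G x)
        = NZ.filter (fun x => b1 ∈ Nc G x ∧ a2 ∈ Nc G x) := Finset.filter_filter _ _ _
    have hand1 : NZ.filter (fun x => b1 ∈ Nc G x ∧ a1 ∈ Nc G x)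
        = NZ.filter (fun x => a1 ∈ Nc G x ∧ b1 ∈ Nc G x) := by
      apply Finset.filter_congr
      intro x _
      exact and_comm
    have hand2 : NZ.filter (fun x => b1 ∈ Nc G x ∧ a2 ∈ Nc G x)
        = NZ.filter (fun x => a2 ∈ Nc G x ∧ b1 ∈ Nc G x) := by
      apply Finset.filter_congr
      intro x _
      exact and_comm
    have hcongr : (NZ.filter (fun x => b1 ∈ Nc G x)).filter (fun x => a2 ∈ Nc G x)
        = (NZ.filter (fun x => b1 ∈ Nc G x)).filter (fun x => ¬ a1 ∈ Nc G x) := by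
      apply Finset.filter_congr
      intro x hx
      have hxNZ : x ∈ NZ := Finset.mem_of_mem_filter x hx
      constructor
      · intro h2 h1
        exact honeA x hxNZ ⟨h1, h2⟩
      · intro h1
        rcases hexA' x hxNZ with h | h
        · exact absurd h h1
        · exact h
    have hsp : ((NZ.filter (fun x => b1 ∈ Nc G x)).filter (fun x => a1 ∈ Nc G x)).card
        + ((NZ.filter (fun x => b1 ∈ Nc G x)).filter (fun x => ¬ a1 ∈ Nc G x)).card
        = (NZ.filter (fun x => b1 ∈ Nc G x)).card :=
      Finset.card_filter_add_card_filter_not (p := fun x => a1 ∈ Nc G x)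
    rw [← hand1, ← hand2, ← hff1, ← hff2, hcongr, hsp, hNb1]
  -- apply the contradiction machine
  by_cases h2c : 2 ≤ (NZ.filter (fun x => a1 ∈ Nc G x ∧ b1 ∈ Nc G x)).card
  · exact blow b1 b2 hb12 hSbE h2c (by omega)
  · exact blow b2 b1 hb12.symm (by rw [hSbE, Finset.pair_comm]) (by omega) (by omega)


lemma cover2five (hcard : Fintype.card V = 14) (hdeg : ∀ x, 3 ≤ G.degree x)
    (hΔ : ∀ x, G.degree x ≤ 5) (v : V) (R : Finset V) (hR : R ⊆ Wb G v)
    (h5 : R.card ≤ 5) :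
    ∃ y z : V, R.card - 1 ≤ (R ∩ (Nc G y ∪ Nc G z)).card := by
  by_cases h4 : R.card ≤ 4
  · exact cover2 hcard hdeg v R hR h4
  · have h5' : R.card = 5 := by omega
    obtain ⟨y, z, hyz⟩ := coverM hcard hdeg hΔ v R hR h5'
    exact ⟨y, z, by omega⟩

lemma reduce (v x : V)
    (h2 : ∃ y z : V, (Wb G v \ Nc G x).card - 1
      ≤ ((Wb G v \ Nc G x) ∩ (Nc G y ∪ Nc G z)).card) :
    ∃ x' y z : V, (Wb G v).card - 1 ≤ ((Wb G v) ∩ (Nc G x' ∪ Nc G y ∪ Nc G z)).card := by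
  obtain ⟨y, z, hyz⟩ := h2
  refine ⟨x, y, z, ?_⟩
  set W := Wb G v
  set R := W \ Nc G x with hRdef
  have hA : (W ∩ Nc G x) ∪ (R ∩ (Nc G y ∪ Nc G z))
      ⊆ W ∩ (Nc G x ∪ Nc G y ∪ Nc G z) := by
    intro u hu
    rcases Finset.mem_union.mp hu with hu | hu
    · have h1 := Finset.mem_inter.mp hu
      exact Finset.mem_inter.mpr ⟨h1.1,
        Finset.mem_union_left _ (Finset.mem_union_left _ h1.2)⟩
    · have h1 := Finset.mem_inter.mp hu
      have huW : u ∈ W := (Finset.mem_sdiff.mp h1.1).1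
      refine Finset.mem_inter.mpr ⟨huW, ?_⟩
      rcases Finset.mem_union.mp h1.2 with h | h
      · exact Finset.mem_union_left _ (Finset.mem_union_right _ h)
      · exact Finset.mem_union_right _ h
  have hdisj : Disjoint (W ∩ Nc G x) (R ∩ (Nc G y ∪ Nc G z)) := by
    rw [Finset.disjoint_left]
    intro u hu1 hu2
    exact (Finset.mem_sdiff.mp (Finset.mem_inter.mp hu2).1).2 (Finset.mem_inter.mp hu1).2
  have hcards := Finset.card_union_of_disjoint hdisj
  have hle := Finset.card_le_card hA
  have hsum : R.card + (W ∩ Nc G x).card = W.card := Finset.card_sdiff_add_card_inter W (Nc G x)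
  omega

lemma final_count (hcard : Fintype.card V = 14) (v x y z : V)
    (hc : (Wb G v).card - 1 ≤ ((Wb G v) ∩ (Nc G x ∪ Nc G y ∪ Nc G z)).card) :
    13 ≤ (Nc G v ∪ (Nc G x ∪ Nc G y ∪ Nc G z)).card := by
  set W := Wb G v with hWdef
  set B := Nc G x ∪ Nc G y ∪ Nc G z with hBdef
  have hdisj : Disjoint (Nc G v) (W ∩ B) := by
    rw [Finset.disjoint_left]
    intro u hu1 hu2
    have := (Finset.mem_inter.mp hu2).1
    rw [hWdef, Wb, Finset.mem_sdiff] at this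
    exact this.2 hu1
  have hsub : Nc G v ∪ (W ∩ B) ⊆ Nc G v ∪ B := by
    intro u hu
    rcases Finset.mem_union.mp hu with hu | hu
    · exact Finset.mem_union_left _ hu
    · exact Finset.mem_union_right _ (Finset.mem_inter.mp hu).2
  have h1 := Finset.card_union_of_disjoint hdisj
  have h2 := Finset.card_le_card hsub
  have hW : W.card + (Nc G v).card = 14 := by
    rw [hWdef, Wb, Finset.card_sdiff_of_subset (Finset.subset_univ _), Finset.card_univ, hcard]
    have : (Nc G v).card ≤ 14 := by
      rw [← hcard, ← Finset.card_univ]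
      exact Finset.card_le_card (Finset.subset_univ _)
    omega
  have hWpos : 1 ≤ W.card ∨ W.card = 0 := by omega
  rcases hWpos with hp | hp
  · omega
  · -- W empty : Nc v is everything
    have : (Nc G v).card = 14 := by omega
    have hsub2 : Nc G v ⊆ Nc G v ∪ B := Finset.subset_union_left
    have := Finset.card_le_card hsub2
    omega

lemma main_cover (hcard : Fintype.card V = 14) (hdeg : ∀ x, 3 ≤ G.degree x)
    (v : V) (hv4 : 4 ≤ G.degree v) (hvmax : ∀ x, G.degree x ≤ G.degree v) :
    ∃ x y z : V, (Wb G v).card - 1 ≤ ((Wb G v) ∩ (Nc G x ∪ Nc G y ∪ Nc G z)).card := by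
  have hWNc : (Wb G v).card + (Nc G v).card = 14 := by
    rw [Wb, Finset.card_sdiff_of_subset (Finset.subset_univ _), Finset.card_univ, hcard]
    have : (Nc G v).card ≤ 14 := by
      rw [← hcard, ← Finset.card_univ]
      exact Finset.card_le_card (Finset.subset_univ _)
    omega
  have hNcv : (Nc G v).card = G.degree v + 1 := card_Nc v
  have hk : (Wb G v).card + G.degree v = 13 := by omega
  have hk9 : (Wb G v).card ≤ 9 := by omega
  have hWsub : Wb G v ⊆ Wb G v := le_refl _
  by_cases hk4 : (Wb G v).card ≤ 4
  · obtain ⟨y, z, hyz⟩ := cover2 hcard hdeg v (Wb G v) hWsub hk4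
    refine ⟨y, y, z, ?_⟩
    have heq : Wb G v ∩ (Nc G y ∪ Nc G y ∪ Nc G z) = Wb G v ∩ (Nc G y ∪ Nc G z) := by
      rw [Finset.union_self]
    rw [heq]
    exact hyz
  push_neg at hk4
  by_cases hk7 : (Wb G v).card ≤ 7
  · -- 5 ≤ |W| ≤ 7 : first pick covering ≥ |W| - 4, then two picks on ≤ 4 leftovers
    obtain ⟨x, hx⟩ := pigeon hcard hdeg v (Wb G v) hWsub ((Wb G v).card - 5) (by omega)
    apply reduce v x
    have hsub : Wb G v \ Nc G x ⊆ Wb G v := Finset.sdiff_subset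
    have hcard4 : (Wb G v \ Nc G x).card ≤ 4 := by
      have := Finset.card_sdiff_add_card_inter (Wb G v) (Nc G x)
      omega
    exact cover2 hcard hdeg v _ hsub hcard4
  by_cases hk8 : (Wb G v).card ≤ 8
  · -- |W| = 8 : degree of v is 5, so Δ ≤ 5
    have hΔ5 : ∀ u, G.degree u ≤ 5 := fun u => by have := hvmax u; omega
    obtain ⟨x, hx⟩ := pigeon hcard hdeg v (Wb G v) hWsub 2 (by omega)
    apply reduce v x
    have hsub : Wb G v \ Nc G x ⊆ Wb G v := Finset.sdiff_subset
    have hcard5 : (Wb G v \ Nc G x).card ≤ 5 := by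
      have := Finset.card_sdiff_add_card_inter (Wb G v) (Nc G x)
      omega
    exact cover2five hcard hdeg hΔ5 v _ hsub hcard5
  · -- |W| = 9 : Δ = 4
    have hW9 : (Wb G v).card = 9 := by omega
    have hΔ4 : ∀ u, G.degree u ≤ 4 := fun u => by have := hvmax u; omega
    by_cases hbig : ∃ x : V, 4 ≤ ((Wb G v) ∩ Nc G x).card
    · obtain ⟨x, hx⟩ := hbig
      apply reduce v x
      have hsub : Wb G v \ Nc G x ⊆ Wb G v := Finset.sdiff_subset
      have hcard5 : (Wb G v \ Nc G x).card ≤ 5 := by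
        have := Finset.card_sdiff_add_card_inter (Wb G v) (Nc G x)
        omega
      exact cover2five hcard hdeg (fun u => by have := hΔ4 u; omega) v _ hsub hcard5
    · push_neg at hbig
      obtain ⟨x, y, z, hxyz⟩ := coverK hcard hdeg hΔ4 v hW9
        (fun x => by have := hbig x; omega)
      exact ⟨x, y, z, by omega⟩


end Supercubic

open Supercubic in
/-- In a graph of order 14 with `δ ≥ 3` and `Δ ≥ 4`, four vertices dominate at least 13 vertices. -/
theorem supercubic_order14 (G : SimpleGraph V) (h14 : Fintype.card V = 14)
    (hmin : ∀ v : V, 3 ≤ (G.neighborSet v).ncard)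
    (hmax : ∃ v : V, 4 ≤ (G.neighborSet v).ncard) :
    ∃ v₁ v₂ v₃ v₄ : V, 13 ≤ (closedN G {v₁, v₂, v₃, v₄}).ncard := by
  classical
  have hncard : ∀ v : V, (G.neighborSet v).ncard = G.degree v := by
    intro v
    have hcoe : G.neighborSet v = ↑(G.neighborFinset v) := by
      ext u
      simp
    rw [congrArg Set.ncard hcoe, Set.ncard_coe_finset, SimpleGraph.card_neighborFinset_eq_degree]
  have hdeg : ∀ x : V, 3 ≤ G.degree x := fun x => by
    have := hmin x
    rwa [hncard x] at this
  have hmax' : ∃ u : V, 4 ≤ G.degree u := by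
    obtain ⟨u, hu⟩ := hmax
    exact ⟨u, by rwa [hncard u] at hu⟩
  have hne : Nonempty V := by
    rw [← Fintype.card_pos_iff]
    omega
  obtain ⟨v, -, hvmax⟩ := Finset.exists_max_image Finset.univ (fun x => G.degree x)
    (Finset.univ_nonempty)
  have hvmax' : ∀ x : V, G.degree x ≤ G.degree v := fun x => hvmax x (Finset.mem_univ x)
  have hv4 : 4 ≤ G.degree v := by
    obtain ⟨u, hu⟩ := hmax'
    exact le_trans hu (hvmax' u)
  obtain ⟨x, y, z, hc⟩ := main_cover h14 hdeg v hv4 hvmax'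
  have h13 := final_count h14 v x y z hc
  refine ⟨v, x, y, z, ?_⟩
  have hmem : ∀ w : V, w ∈ ({v, x, y, z} : Set V) → ∀ u : V, u ∈ Nc G w →
      u ∈ closedN G {v, x, y, z} := by
    intro w hw u hu
    simp only [closedN, Set.mem_setOf_eq]
    rcases mem_Nc.mp hu with rfl | hAdj
    · exact Or.inl hw
    · exact Or.inr ⟨w, hw, hAdj⟩
  have hsubset : ↑(Nc G v ∪ (Nc G x ∪ Nc G y ∪ Nc G z)) ⊆ closedN G {v, x, y, z} := by
    intro u hu
    rw [Finset.mem_coe] at hu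
    rcases Finset.mem_union.mp hu with h | h
    · exact hmem v (by simp) u h
    rcases Finset.mem_union.mp h with h | h
    · rcases Finset.mem_union.mp h with h | h
      · exact hmem x (by simp) u h
      · exact hmem y (by simp) u h
    · exact hmem z (by simp) u h
  calc (13 : ℕ) ≤ (Nc G v ∪ (Nc G x ∪ Nc G y ∪ Nc G z)).card := h13
  _ = (↑(Nc G v ∪ (Nc G x ∪ Nc G y ∪ Nc G z)) : Set V).ncard :=
      (Set.ncard_coe_finset _).symm
  _ ≤ (closedN G {v, x, y, z}).ncard := Set.ncard_le_ncard hsubset (Set.toFinite _)
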